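/- arXiv:2602.16311 — 3 statements merged into one kernel-verified Lean document; each statement's English description precedes it below -/
import Mathlib

section
/- Let G = (V, E) be a directed acyclic graph and let s, t ∈ V be such that every node v ∈ V lies on some s-t-path (i.e., there exist an s-v-path and a v-t-path in G). Then a set S ⊆ E is an identifying set for X^path_{G,s,t} if and only if there do not exist nodes v, w ∈ V together with two distinct internally node-disjoint v-w-paths in the subgraph (V, E \ S). -/
/-- The list of consecutive arcs of a list of vertices. -/
def arcsOf {V : Type*} (l : List V) : List (V × V) := l.zip l.tail

/-- `l` is (the vertex list of) a simple directed path from `u` to `v`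
using only arcs from `A`. -/
def IsPathOn {V : Type*} (A : Set (V × V)) (u v : V) (l : List V) : Prop :=
  l.Nodup ∧ l.head? = some u ∧ l.getLast? = some v ∧ ∀ p ∈ arcsOf l, p ∈ A

/-- The incidence vector of (the arc set of) a path given by vertex list `l`. -/
def pathVec {V : Type*} [DecidableEq V] (l : List V) : (V × V) → ℝ :=
  fun p => if p ∈ arcsOf l then 1 else 0

/-- `X^path`: the set of incidence vectors of simple `s`-`t`-paths in the digraph
with arc set `A`. -/
def XPath {V : Type*} [DecidableEq V] (A : Set (V × V)) (s t : V) :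
    Set ((V × V) → ℝ) :=
  {x | ∃ l : List V, IsPathOn A s t l ∧ x = pathVec l}

/-- `X^flow`: the set of nonnegative `s`-`t`-flows of value 1 in the digraph with
arc set `A` (flows vanish outside `A`, and every node has the appropriate excess). -/
def XFlow {V : Type*} [Fintype V] [DecidableEq V] (A : Set (V × V)) (s t : V) :
    Set ((V × V) → ℝ) :=
  {x | (∀ p, 0 ≤ x p) ∧ (∀ p, p ∉ A → x p = 0) ∧
    ∀ v, (∑ w, x (v, w)) - (∑ u, x (u, v)) =
      if v = s then 1 else if v = t then -1 else 0}

/-- `S` is identifying for `X`: any two distinct members of `X` differ on some arc in `S`. -/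
def Identifying {V : Type*} (X : Set ((V × V) → ℝ)) (S : Set (V × V)) : Prop :=
  ∀ x ∈ X, ∀ y ∈ X, x ≠ y → ∃ e ∈ S, x e ≠ y e

/-- The digraph with arc set `A` is acyclic: it has no directed cycle. -/
def IsAcyclicDigraph {V : Type*} (A : Set (V × V)) : Prop :=
  ¬ ∃ (a : V) (l : List V), (a :: l).Nodup ∧
      ∀ p ∈ arcsOf (a :: (l ++ [a])), p ∈ A

section Aux
variable {V : Type*}

theorem aux_arcsOf_cons_cons (a b : V) (l : List V) :
    arcsOf (a :: b :: l) = (a, b) :: arcsOf (b :: l) := rfl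

theorem aux_arcsOf_append (X : List V) (a : V) (Z : List V) :
    arcsOf (X ++ a :: Z) = arcsOf (X ++ [a]) ++ arcsOf (a :: Z) := by
  induction X with
  | nil => simp [arcsOf]
  | cons x X ih =>
    cases X with
    | nil => simp [arcsOf]
    | cons y Y =>
      simp only [List.cons_append, aux_arcsOf_cons_cons] at *
      rw [ih]

theorem aux_arcsOf_cons_subset (a : V) (l : List V) :
    ∀ e ∈ arcsOf l, e ∈ arcsOf (a :: l) := by
  cases l with
  | nil => simp [arcsOf]
  | cons b l' => intro e he; rw [aux_arcsOf_cons_cons]; exact List.mem_cons_of_mem _ he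

theorem aux_mem_arcsOf {l : List V} {u v : V} :
    (u, v) ∈ arcsOf l ↔ ∃ p q, l = p ++ u :: v :: q := by
  constructor
  · intro h
    induction l with
    | nil => simp [arcsOf] at h
    | cons a l ih =>
      cases l with
      | nil => simp [arcsOf] at h
      | cons b l' =>
        rw [aux_arcsOf_cons_cons, List.mem_cons] at h
        rcases h with h | h
        · obtain ⟨rfl, rfl⟩ := Prod.mk.injEq .. ▸ h
          exact ⟨[], l', by simp⟩
        · obtain ⟨p, q, hpq⟩ := ih h
          exact ⟨a :: p, q, by rw [hpq]; simp⟩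
  · rintro ⟨p, q, rfl⟩
    induction p with
    | nil => simp only [List.nil_append, aux_arcsOf_cons_cons]; exact List.mem_cons_self
    | cons c p ih => exact aux_arcsOf_cons_subset c _ _ ih

theorem aux_arcsOf_sub (x l y : List V) : ∀ e ∈ arcsOf l, e ∈ arcsOf (x ++ l ++ y) := by
  rintro ⟨u, v⟩ he
  rw [aux_mem_arcsOf] at he ⊢
  obtain ⟨p, q, rfl⟩ := he
  exact ⟨x ++ p, q ++ y, by simp⟩

theorem aux_split_unique {u : V} : ∀ (p : List V) {q p' q' : List V},
    (p ++ u :: q).Nodup → p ++ u :: q = p' ++ u :: q' → p = p' ∧ q = q' := by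
  intro p
  induction p with
  | nil =>
    intro q p' q' hnd heq
    cases p' with
    | nil => simpa using heq
    | cons c p'' =>
      simp only [List.nil_append, List.cons_append, List.cons.injEq] at heq
      obtain ⟨rfl, heq⟩ := heq
      exfalso
      have : u ∈ q := by rw [heq]; exact List.mem_append_right _ (List.mem_cons_self)
      exact (List.nodup_cons.mp hnd).1 this
  | cons c p ih =>
    intro q p' q' hnd heq
    cases p' with
    | nil =>
      simp only [List.cons_append, List.nil_append, List.cons.injEq] at heq
      obtain ⟨hcu, heq2⟩ := heq
      rw [hcu] at hnd
      exfalso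
      have hm : u ∈ p ++ u :: q := List.mem_append_right _ (List.mem_cons_self)
      have hnd' : (u :: (p ++ u :: q)).Nodup := by simpa using hnd
      exact (List.nodup_cons.mp hnd').1 hm
    | cons c' p'' =>
      simp only [List.cons_append, List.cons.injEq] at heq
      obtain ⟨rfl, heq⟩ := heq
      have := ih (List.nodup_cons.mp (by simpa using hnd)).2 heq
      exact ⟨by rw [this.1], this.2⟩

theorem aux_out_unique {l : List V} (h : l.Nodup) {u a b : V}
    (ha : (u, a) ∈ arcsOf l) (hb : (u, b) ∈ arcsOf l) : a = b := by
  rw [aux_mem_arcsOf] at ha hb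
  obtain ⟨p, q, rfl⟩ := ha
  obtain ⟨p', q', he⟩ := hb
  have := (aux_split_unique p h he).2
  exact (List.cons.injEq .. ▸ this).1

/-- A (not necessarily simple) walk from `u` to `v` with arcs in `A`. -/
def AWalk (A : Set (V × V)) (u v : V) (l : List V) : Prop :=
  l.head? = some u ∧ l.getLast? = some v ∧ ∀ p ∈ arcsOf l, p ∈ A

variable {A : Set (V × V)}

theorem aux_walk_append {u v w : V} {l₁ l₂ : List V}
    (h₁ : AWalk A u v l₁) (h₂ : AWalk A v w l₂) : AWalk A u w (l₁ ++ l₂.tail) := by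
  obtain ⟨hh1, hl1, ha1⟩ := h₁
  obtain ⟨hh2, hl2, ha2⟩ := h₂
  have hne1 : l₁ ≠ [] := by rintro rfl; simp at hh1
  obtain ⟨Z, rfl⟩ : ∃ Z, l₂ = v :: Z := by
    cases l₂ with
    | nil => simp at hh2
    | cons c Z => simp only [List.head?_cons, Option.some.injEq] at hh2; exact ⟨Z, by rw [hh2]⟩
  have hdec : l₁ = l₁.dropLast ++ [v] := by
    have h1 := List.dropLast_append_getLast hne1
    have h2 : l₁.getLast hne1 = v := by
      rw [List.getLast?_eq_getLast hne1] at hl1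
      exact Option.some.injEq .. ▸ hl1
    rw [← h2]; exact h1.symm
  refine ⟨?_, ?_, ?_⟩
  · rw [List.head?_append_of_ne_nil _ hne1]; exact hh1
  · cases Z with
    | nil =>
      simp only [List.tail_cons, List.append_nil]
      simpa using hl1.trans (by simpa using hl2)
    | cons z Z' =>
      rw [List.tail_cons, List.getLast?_append_of_ne_nil _ (by simp : (z :: Z') ≠ [])]
      simpa using hl2
  · rw [List.tail_cons]
    intro p hp
    rw [show l₁ ++ Z = l₁.dropLast ++ v :: Z by rw [hdec]; simp, aux_arcsOf_append] at hp
    rcases List.mem_append.mp hp with h | h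
    · exact ha1 p (by rw [hdec]; exact h)
    · exact ha2 p h

theorem aux_walk_to {l : List V} {y u : V}
    (harcs : ∀ p ∈ arcsOf l, p ∈ A) (hlast : l.getLast? = some y) (hu : u ∈ l) :
    ∃ m, AWalk A u y m := by
  obtain ⟨p, q, rfl⟩ := List.append_of_mem hu
  refine ⟨u :: q, rfl, ?_, ?_⟩
  · rw [List.getLast?_append_of_ne_nil _ (by simp : (u :: q) ≠ [])] at hlast; exact hlast
  · intro e he
    exact harcs e (by simpa using aux_arcsOf_sub p (u :: q) [] e he)

theorem aux_walk_from {l : List V} {x u : V}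
    (harcs : ∀ p ∈ arcsOf l, p ∈ A) (hhead : l.head? = some x) (hu : u ∈ l) :
    ∃ m, AWalk A x u m := by
  obtain ⟨p, q, rfl⟩ := List.append_of_mem hu
  refine ⟨p ++ [u], ?_, (List.getLast?_concat (l := p)), ?_⟩
  · rw [← hhead]; cases p <;> simp
  · intro e he
    exact harcs e (by simpa using aux_arcsOf_sub [] (p ++ [u]) q e (by simpa using he))

theorem aux_dup_split : ∀ {l : List V}, ¬ l.Nodup → ∃ (b : V) (p q r : List V),
    l = p ++ b :: q ++ b :: r := by
  intro l
  induction l with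
  | nil => intro h; exact absurd List.nodup_nil h
  | cons c l ih =>
    intro h
    by_cases hc : c ∈ l
    · obtain ⟨q, r, rfl⟩ := List.append_of_mem hc
      exact ⟨c, [], q, r, by simp⟩
    · have : ¬ l.Nodup := fun hnd => h (List.nodup_cons.mpr ⟨hc, hnd⟩)
      obtain ⟨b, p, q, r, rfl⟩ := ih this
      exact ⟨b, c :: p, q, r, by simp⟩

theorem aux_no_closed (hacyc : IsAcyclicDigraph A) :
    ∀ (n : ℕ) (W : List V), W.length ≤ n → 2 ≤ W.length →
    W.head? = W.getLast? → (∀ p ∈ arcsOf W, p ∈ A) → False := by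
  intro n
  induction n with
  | zero => intro W h1 h2; omega
  | succ n ih =>
    intro W hlen h2 hcl harcs
    obtain ⟨a, T, rfl⟩ : ∃ a T, W = a :: T := by
      cases W with
      | nil => simp at h2
      | cons a T => exact ⟨a, T, rfl⟩
    have hTne : T ≠ [] := by rintro rfl; simp at h2
    have hlast : T.getLast? = some a := by
      rw [show (a :: T) = [a] ++ T by simp, List.head?_append_of_ne_nil _ (by simp : [a] ≠ []),
        List.getLast?_append_of_ne_nil _ hTne] at hcl
      exact hcl.symm.trans rfl |>.symm ▸ hcl.symm
    have hW : a :: T = a :: (T.dropLast ++ [a]) := by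
      have h1 := List.dropLast_append_getLast hTne
      have h2' : T.getLast hTne = a := by
        rw [List.getLast?_eq_getLast hTne] at hlast
        exact Option.some.injEq .. ▸ hlast
      rw [← h2', h1]
    set M := T.dropLast with hM
    by_cases hnd : (a :: M).Nodup
    · exact hacyc ⟨a, M, hnd, fun p hp => harcs p (by rw [hW]; exact hp)⟩
    · obtain ⟨b, p, q, r, hsplit⟩ := aux_dup_split hnd
      have hlenW : (a :: T).length = p.length + q.length + r.length + 3 := by
        rw [hW]
        have : (a :: M).length = p.length + q.length + r.length + 2 := by
          rw [hsplit]; simp; omega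
        simp at this ⊢
        omega
      have hq : q.length + 2 ≤ n := by
        rw [hlenW] at hlen; simp at hlen; omega
      apply ih (b :: (q ++ [b])) (by simp; omega) (by simp)
      · rw [show b :: (q ++ [b]) = (b :: q) ++ [b] by simp, List.getLast?_concat]
        rw [List.head?_append_of_ne_nil _ (by simp : (b :: q) ≠ [])]
        simp
      · intro e he
        apply harcs
        have hWeq : a :: T = p ++ (b :: (q ++ [b])) ++ (r ++ [a]) := by
          rw [hW]
          have : a :: M = p ++ b :: q ++ b :: r := hsplit
          rw [show a :: (M ++ [a]) = (a :: M) ++ [a] by simp, this]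
          simp
        rw [hWeq]
        exact aux_arcsOf_sub p _ (r ++ [a]) e he

theorem aux_two_walks (hacyc : IsAcyclicDigraph A) {u v : V} {l₁ l₂ : List V}
    (huv : u ≠ v) (h₁ : AWalk A u v l₁) (h₂ : AWalk A v u l₂) : False := by
  have hw := aux_walk_append h₁ h₂
  have hlen : 2 ≤ l₁.length := by
    cases l₁ with
    | nil => exact absurd h₁.1 (by simp)
    | cons a T =>
      cases T with
      | nil =>
        exfalso; apply huv
        have h1 : a = u := by simpa using h₁.1
        have h2 : a = v := by simpa using h₁.2.1
        rw [← h1, h2]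
      | cons b T' => simp
  exact aux_no_closed hacyc (l₁ ++ l₂.tail).length _ le_rfl
    (le_trans hlen (by simp)) (hw.1.trans hw.2.1.symm) hw.2.2

theorem aux_head?_append_cons (c : List V) (x : V) (r r' : List V) :
    (c ++ x :: r).head? = (c ++ x :: r').head? := by cases c <;> simp

theorem aux_eq_singleton {l : List V} {v : V} (hnd : l.Nodup) (hh : l.head? = some v)
    (hl : l.getLast? = some v) : l = [v] := by
  cases l with
  | nil => simp at hh
  | cons a T =>
    have ha : a = v := by simpa using hh
    subst ha
    cases T with
    | nil => rfl
    | cons b T' =>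
      exfalso
      have : (b :: T').getLast? = some a := by
        rw [show a :: b :: T' = [a] ++ b :: T' by simp,
          List.getLast?_append_of_ne_nil _ (by simp : (b :: T') ≠ [])] at hl
        exact hl
      have hv : a ∈ b :: T' := List.mem_of_getLast? this
      exact (List.nodup_cons.mp hnd).1 hv

theorem aux_decomp {l : List V} {v w : V} (hvw : v ≠ w) (hh : l.head? = some v)
    (hl : l.getLast? = some w) : ∃ m, l = v :: (m ++ [w]) := by
  cases l with
  | nil => simp at hh
  | cons a T =>
    have ha : a = v := by simpa using hh
    subst ha
    have hTne : T ≠ [] := by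
      rintro rfl
      exact hvw (by simpa using hl)
    have hlast : T.getLast? = some w := by
      rw [show a :: T = [a] ++ T by simp, List.getLast?_append_of_ne_nil _ hTne] at hl
      exact hl
    refine ⟨T.dropLast, ?_⟩
    have h1 := List.dropLast_append_getLast hTne
    have h2 : T.getLast hTne = w := by
      rw [List.getLast?_eq_getLast hTne] at hlast
      simpa using hlast
    rw [← h2, h1]

theorem aux_lcp : ∀ (l₁ l₂ : List V) (s : V), l₁ ≠ l₂ → l₁.head? = some s →
    l₂.head? = some s →
    ∃ c v r₁ r₂, l₁ = c ++ v :: r₁ ∧ l₂ = c ++ v :: r₂ ∧ r₁.head? ≠ r₂.head? := by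
  intro l₁
  induction l₁ with
  | nil => intro l₂ s hne hh₁ hh₂; simp at hh₁
  | cons a T₁ ih =>
    intro l₂ s hne hh₁ hh₂
    have ha : a = s := by simpa using hh₁
    subst ha
    obtain ⟨T₂, rfl⟩ : ∃ T₂, l₂ = a :: T₂ := by
      cases l₂ with
      | nil => simp at hh₂
      | cons b T₂ =>
        have hb : b = a := by simpa using hh₂
        exact ⟨T₂, by rw [hb]⟩
    by_cases hT : T₁.head? = T₂.head?
    · have hTne : T₁ ≠ T₂ := fun h => hne (by rw [h])
      cases T₁ with
      | nil =>
        cases T₂ with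
        | nil => exact absurd rfl hTne
        | cons h' T₂' => simp at hT
      | cons h T₁' =>
        cases T₂ with
        | nil => simp at hT
        | cons h' T₂' =>
          obtain ⟨c, v, r₁, r₂, e1, e2, hhd⟩ :=
            ih (h' :: T₂') h hTne rfl (by simpa using hT.symm)
          exact ⟨a :: c, v, r₁, r₂, by rw [e1]; simp, by rw [e2]; simp, hhd⟩
    · exact ⟨[], a, T₁, T₂, by simp, by simp, hT⟩

theorem aux_first_mem : ∀ (l m : List V) (x : V), x ∈ l → x ∈ m →
    ∃ p w q, l = p ++ w :: q ∧ w ∈ m ∧ ∀ y ∈ p, y ∉ m := by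
  intro l
  induction l with
  | nil => intro m x hx; simp at hx
  | cons c l ih =>
    intro m x hx hm
    by_cases hc : c ∈ m
    · exact ⟨[], c, l, by simp, hc, by simp⟩
    · have hx' : x ∈ l := by
        rcases List.mem_cons.mp hx with h | h
        · exact absurd (h ▸ hm) hc
        · exact h
      obtain ⟨p, w, q, hl, hw, hp⟩ := ih m x hx' hm
      refine ⟨c :: p, w, q, by rw [hl]; simp, hw, ?_⟩
      intro y hy
      rcases List.mem_cons.mp hy with h | h
      · exact h ▸ hc
      · exact hp y h

theorem aux_arc_fst_ne_last {l : List V} (hnd : l.Nodup) {w u u' : V}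
    (hl : l.getLast? = some w) (h : (u, u') ∈ arcsOf l) : u ≠ w := by
  rintro rfl
  obtain ⟨p, q, rfl⟩ := aux_mem_arcsOf.mp h
  have hlast : (u' :: q).getLast? = some u := by
    rw [show p ++ u :: u' :: q = (p ++ [u]) ++ (u' :: q) by simp,
      List.getLast?_append_of_ne_nil _ (by simp : (u' :: q) ≠ [])] at hl
    exact hl
  have hmem : u ∈ u' :: q := List.mem_of_getLast? hlast
  have hdis : (p ++ [u]).Disjoint (u' :: q) :=
    List.disjoint_of_nodup_append (by simpa using hnd)
  exact hdis (List.mem_append_right _ (List.mem_cons_self)) hmem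

end Aux

/-- Let `G` be a directed acyclic graph with arc set `A` in which every node lies on
some `s`-`t`-path.  Then `S ⊆ A` is identifying for the `s`-`t`-paths if and only if
there is no pair of nodes `v, w` admitting two distinct internally node-disjoint
`v`-`w`-paths in the subgraph with arc set `A \ S`. -/
theorem stmt8 {V : Type*} [Fintype V] [DecidableEq V] (A : Set (V × V)) (s t : V)
    (hacyc : IsAcyclicDigraph A)
    (hcover : ∀ v : V, ∃ l, IsPathOn A s t l ∧ v ∈ l)
    (S : Set (V × V)) (hS : S ⊆ A) :
    Identifying (XPath A s t) S ↔
      ¬ ∃ (v w : V) (l₁ l₂ : List V),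
          IsPathOn (A \ S) v w l₁ ∧ IsPathOn (A \ S) v w l₂ ∧ l₁ ≠ l₂ ∧
          ∀ u, u ∈ l₁ → u ∈ l₂ → u = v ∨ u = w := by
  constructor
  · rintro hid ⟨v, w, l₁, l₂, ⟨hnd₁, hh₁, hl₁, ha₁⟩, ⟨hnd₂, hh₂, hl₂, ha₂⟩, hne, hdisj⟩
    have hvw : v ≠ w := by
      rintro rfl
      exact hne ((aux_eq_singleton hnd₁ hh₁ hl₁).trans (aux_eq_singleton hnd₂ hh₂ hl₂).symm)
    obtain ⟨m₁, hm₁⟩ := aux_decomp hvw hh₁ hl₁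
    obtain ⟨m₂, hm₂⟩ := aux_decomp hvw hh₂ hl₂
    obtain ⟨a₁, z₁, hz₁⟩ : ∃ a z, m₁ ++ [w] = a :: z := by cases m₁ <;> exact ⟨_, _, rfl⟩
    obtain ⟨a₂, z₂, hz₂⟩ : ∃ a z, m₂ ++ [w] = a :: z := by cases m₂ <;> exact ⟨_, _, rfl⟩
    rw [hm₁] at hnd₁ ha₁
    rw [hm₂] at hnd₂ ha₂
    rw [hm₁, hm₂] at hne hdisj
    clear hm₁ hm₂ hh₁ hh₂ hl₁ hl₂
    have hvnot₁ : v ∉ m₁ ++ [w] := (List.nodup_cons.mp hnd₁).1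
    have hvnot₂ : v ∉ m₂ ++ [w] := (List.nodup_cons.mp hnd₂).1
    have hwnot : ∀ m : List V, (v :: (m ++ [w])).Nodup → w ∉ v :: m := by
      intro m hnd hw
      have hnd' : ((v :: m) ++ [w]).Nodup := by simpa using hnd
      exact List.disjoint_of_nodup_append hnd' hw (by simp)
    -- the second vertices differ
    have ha12 : a₁ ≠ a₂ := by
      intro h
      have hmem₁ : a₁ ∈ v :: (m₁ ++ [w]) := by
        rw [hz₁]; exact List.mem_cons_of_mem _ (List.mem_cons_self)
      have hmem₂ : a₁ ∈ v :: (m₂ ++ [w]) := by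
        rw [hz₂, h]; exact List.mem_cons_of_mem _ (List.mem_cons_self)
      rcases hdisj a₁ hmem₁ hmem₂ with h' | h'
      · apply hvnot₁; rw [hz₁, ← h']; exact List.mem_cons_self
      · -- a₁ = w forces both m₁ and m₂ empty
        have hm1nil : m₁ = [] := by
          cases m₁ with
          | nil => rfl
          | cons c m₁' =>
            exfalso
            have hc : c = a₁ := by
              have := hz₁; simp only [List.cons_append, List.cons.injEq] at this
              exact this.1
            exact hwnot (c :: m₁') hnd₁ (by
              rw [← h', ← hc]
              exact List.mem_cons_of_mem _ (List.mem_cons_self))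
        have hm2nil : m₂ = [] := by
          cases m₂ with
          | nil => rfl
          | cons c m₂' =>
            exfalso
            have hc : c = a₁ := by
              have := hz₂; simp only [List.cons_append, List.cons.injEq] at this
              rw [this.1, h]
            exact hwnot (c :: m₂') hnd₂ (by
              rw [← h', ← hc]
              exact List.mem_cons_of_mem _ (List.mem_cons_self))
        rw [hm1nil, hm2nil] at hne
        exact hne rfl
    obtain ⟨L, ⟨hndL, hhL, hlL, haL⟩, hvL⟩ := hcover v
    obtain ⟨L', ⟨hndL', hhL', hlL', haL'⟩, hwL'⟩ := hcover w
    obtain ⟨c₁, d₁, rfl⟩ := List.append_of_mem hvL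
    obtain ⟨c₂, d₂, rfl⟩ := List.append_of_mem hwL'
    have harcsR : ∀ m : List V, arcsOf (c₁ ++ v :: (m ++ w :: d₂)) =
        arcsOf (c₁ ++ [v]) ++ (arcsOf (v :: (m ++ [w])) ++ arcsOf (w :: d₂)) := by
      intro m
      rw [aux_arcsOf_append c₁ v (m ++ w :: d₂)]
      congr 1
      rw [show v :: (m ++ w :: d₂) = (v :: m) ++ w :: d₂ by simp,
        aux_arcsOf_append (v :: m) w d₂,
        show (v :: m) ++ [w] = v :: (m ++ [w]) by simp]
    have harcs_cv : ∀ p ∈ arcsOf (c₁ ++ [v]), p ∈ A := by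
      intro p hp
      apply haL
      have := aux_arcsOf_sub [] (c₁ ++ [v]) d₁ p hp
      simpa using this
    have harcs_wd : ∀ p ∈ arcsOf (w :: d₂), p ∈ A := by
      intro p hp
      apply haL'
      have := aux_arcsOf_sub c₂ (w :: d₂) [] p hp
      simpa using this
    have hndc₁ : c₁.Nodup := (List.sublist_append_left c₁ (v :: d₁)).nodup hndL
    have hndwd : (w :: d₂).Nodup := (List.sublist_append_right c₂ (w :: d₂)).nodup hndL'
    have hvnotc₁ : v ∉ c₁ := by
      intro h
      exact List.disjoint_of_nodup_append hndL h (List.mem_cons_self)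
    -- main construction
    have key : ∀ m : List V, (v :: (m ++ [w])).Nodup →
        (∀ p ∈ arcsOf (v :: (m ++ [w])), p ∈ A \ S) →
        IsPathOn A s t (c₁ ++ v :: (m ++ w :: d₂)) := by
      intro m hnd hA
      have harcs_l : ∀ p ∈ arcsOf (v :: (m ++ [w])), p ∈ A := fun p hp => (hA p hp).1
      have hlast_l : (v :: (m ++ [w])).getLast? = some w := by
        rw [show v :: (m ++ [w]) = (v :: m) ++ [w] by simp]
        exact List.getLast?_concat
      have hwalkvw : AWalk A v w (v :: (m ++ [w])) := ⟨rfl, hlast_l, harcs_l⟩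
      have hmemext : ∀ u : V, u ∈ v :: m → u ∈ v :: (m ++ [w]) := by
        intro u hu
        rcases List.mem_cons.mp hu with h | h
        · exact h ▸ List.mem_cons_self
        · exact List.mem_cons_of_mem _ (List.mem_append_left _ h)
      have hndvm : (v :: m).Nodup := by
        apply List.Sublist.nodup _ hnd
        rw [show v :: (m ++ [w]) = (v :: m) ++ [w] by simp]
        exact List.sublist_append_left _ _
      have hdis1 : (v :: m).Disjoint (w :: d₂) := by
        intro u hu1 hu2
        have huw : u ≠ w := fun h => hwnot m hnd (h ▸ hu1)
        obtain ⟨mm1, hw1⟩ := aux_walk_to harcs_l hlast_l (hmemext u hu1)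
        obtain ⟨mm2, hw2⟩ := aux_walk_from harcs_wd rfl hu2
        exact aux_two_walks hacyc huw hw1 hw2
      have hdis2 : c₁.Disjoint ((v :: m) ++ (w :: d₂)) := by
        intro u hu1 hu2
        have huv : u ≠ v := fun h => hvnotc₁ (h ▸ hu1)
        obtain ⟨mm, hwuv⟩ := aux_walk_to harcs_cv ((List.getLast?_concat (l := c₁)))
          (List.mem_append_left _ hu1)
        have hwvu : ∃ mm', AWalk A v u mm' := by
          rcases List.mem_append.mp hu2 with h | h
          · exact aux_walk_from harcs_l rfl (hmemext u h)
          · obtain ⟨mm', h'⟩ := aux_walk_from harcs_wd rfl h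
            exact ⟨_, aux_walk_append hwalkvw h'⟩
        obtain ⟨mm', hwvu⟩ := hwvu
        exact aux_two_walks hacyc huv hwuv hwvu
      refine ⟨?_, ?_, ?_, ?_⟩
      · rw [show c₁ ++ v :: (m ++ w :: d₂) = c₁ ++ ((v :: m) ++ (w :: d₂)) by simp]
        exact hndc₁.append (hndvm.append hndwd hdis1) hdis2
      · rw [aux_head?_append_cons c₁ v _ d₁]; exact hhL
      · rw [show c₁ ++ v :: (m ++ w :: d₂) = (c₁ ++ v :: m) ++ (w :: d₂) by simp,
          List.getLast?_append_of_ne_nil _ (by simp : (w :: d₂) ≠ [])]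
        rw [show c₂ ++ w :: d₂ = c₂ ++ (w :: d₂) from rfl,
          List.getLast?_append_of_ne_nil _ (by simp : (w :: d₂) ≠ [])] at hlL'
        exact hlL'
      · intro p hp
        rw [harcsR m] at hp
        rcases List.mem_append.mp hp with h | h
        · exact harcs_cv p h
        rcases List.mem_append.mp h with h | h
        · exact (hA p h).1
        · exact harcs_wd p h
    have hpath₁ := key m₁ hnd₁ ha₁
    have hpath₂ := key m₂ hnd₂ ha₂
    have hmemarc : ∀ (m : List V) (a : V) (z : List V), m ++ [w] = a :: z →
        (v, a) ∈ arcsOf (c₁ ++ v :: (m ++ w :: d₂)) := by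
      intro m a z hz
      rw [harcsR m]
      have : (v, a) ∈ arcsOf (v :: (m ++ [w])) := by
        rw [hz, aux_arcsOf_cons_cons]
        exact List.mem_cons_self
      exact List.mem_append_right _ (List.mem_append_left _ this)
    have hmem1 := hmemarc m₁ a₁ z₁ hz₁
    have hmem2 := hmemarc m₂ a₂ z₂ hz₂
    have hnotmem : (v, a₁) ∉ arcsOf (c₁ ++ v :: (m₂ ++ w :: d₂)) :=
      fun h => ha12 (aux_out_unique hpath₂.1 h hmem2)
    have hxy : pathVec (c₁ ++ v :: (m₁ ++ w :: d₂)) ≠ pathVec (c₁ ++ v :: (m₂ ++ w :: d₂)) := by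
      intro h
      have := congrFun h (v, a₁)
      unfold pathVec at this
      rw [if_pos hmem1, if_neg hnotmem] at this
      exact one_ne_zero this
    obtain ⟨e, heS, hediff⟩ := hid _ ⟨_, hpath₁, rfl⟩ _ ⟨_, hpath₂, rfl⟩ hxy
    apply hediff
    have he₁ : e ∉ arcsOf (v :: (m₁ ++ [w])) := fun h => (ha₁ e h).2 heS
    have he₂ : e ∉ arcsOf (v :: (m₂ ++ [w])) := fun h => (ha₂ e h).2 heS
    have hiff : e ∈ arcsOf (c₁ ++ v :: (m₁ ++ w :: d₂)) ↔
        e ∈ arcsOf (c₁ ++ v :: (m₂ ++ w :: d₂)) := by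
      rw [harcsR m₁, harcsR m₂]
      simp only [List.mem_append]
      constructor
      · rintro (h | h | h)
        exacts [Or.inl h, absurd h he₁, Or.inr (Or.inr h)]
      · rintro (h | h | h)
        exacts [Or.inl h, absurd h he₂, Or.inr (Or.inr h)]
    unfold pathVec
    by_cases hc : e ∈ arcsOf (c₁ ++ v :: (m₂ ++ w :: d₂))
    · rw [if_pos (hiff.mpr hc), if_pos hc]
    · rw [if_neg (fun h => hc (hiff.mp h)), if_neg hc]
  · rintro hno x ⟨P₁, hp₁, rfl⟩ y ⟨P₂, hp₂, rfl⟩ hxy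
    by_contra hcon
    push_neg at hcon
    apply hno
    obtain ⟨hnd₁, hh₁, hl₁, ha₁⟩ := hp₁
    obtain ⟨hnd₂, hh₂, hl₂, ha₂⟩ := hp₂
    have hP12 : P₁ ≠ P₂ := fun h => hxy (by rw [h])
    obtain ⟨c, v, r₁, r₂, rfl, rfl, hhead⟩ := aux_lcp P₁ P₂ s hP12 hh₁ hh₂
    have hdisc₁ : c.Disjoint (v :: r₁) := List.disjoint_of_nodup_append hnd₁
    have hdisc₂ : c.Disjoint (v :: r₂) := List.disjoint_of_nodup_append hnd₂
    have hndvr₁ : (v :: r₁).Nodup := (List.sublist_append_right c (v :: r₁)).nodup hnd₁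
    have hndvr₂ : (v :: r₂).Nodup := (List.sublist_append_right c (v :: r₂)).nodup hnd₂
    have hvr₁ : v ∉ r₁ := (List.nodup_cons.mp hndvr₁).1
    have hvr₂ : v ∉ r₂ := (List.nodup_cons.mp hndvr₂).1
    have hndr₁ : r₁.Nodup := (List.nodup_cons.mp hndvr₁).2
    have hndr₂ : r₂.Nodup := (List.nodup_cons.mp hndvr₂).2
    have hlastmem : ∀ r : List V, r ≠ [] → (c ++ v :: r).getLast? = some t → t ∈ r := by
      intro r hrne hl
      rw [List.getLast?_append_of_ne_nil _ (by simp : (v :: r) ≠ []),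
        show v :: r = [v] ++ r by simp, List.getLast?_append_of_ne_nil _ hrne] at hl
      exact List.mem_of_getLast? hl
    have hr₁ne : r₁ ≠ [] := by
      rintro rfl
      have hv : v = t := by
        have h0 : (c ++ [v]).getLast? = some t := hl₁
        rw [List.getLast?_concat] at h0
        simpa using h0
      have hr₂ne : r₂ ≠ [] := by rintro rfl; exact hhead rfl
      exact hvr₂ (hv ▸ hlastmem r₂ hr₂ne hl₂)
    have hr₂ne : r₂ ≠ [] := by
      rintro rfl
      have hv : v = t := by
        have h0 : (c ++ [v]).getLast? = some t := hl₂
        rw [List.getLast?_concat] at h0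
        simpa using h0
      exact hvr₁ (hv ▸ hlastmem r₁ hr₁ne hl₁)
    obtain ⟨a, r₁', hr₁a⟩ : ∃ a r₁', r₁ = a :: r₁' := by
      cases r₁ with
      | nil => exact absurd rfl hr₁ne
      | cons x xs => exact ⟨x, xs, rfl⟩
    obtain ⟨b, r₂', hr₂b⟩ : ∃ b r₂', r₂ = b :: r₂' := by
      cases r₂ with
      | nil => exact absurd rfl hr₂ne
      | cons x xs => exact ⟨x, xs, rfl⟩
    have hab : a ≠ b := by rw [hr₁a, hr₂b] at hhead; simpa using hhead
    have ht₁ : t ∈ r₁ := hlastmem r₁ hr₁ne hl₁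
    have ht₂ : t ∈ r₂ := hlastmem r₂ hr₂ne hl₂
    obtain ⟨s₁, w, e₁, hr1eq, hw2, hs₁⟩ := aux_first_mem r₁ r₂ t ht₁ ht₂
    obtain ⟨s₂, e₂, hr2eq⟩ := List.append_of_mem hw2
    have hwns₂ : w ∉ s₂ := by
      intro h
      have hnd' : (s₂ ++ w :: e₂).Nodup := hr2eq ▸ hndr₂
      exact List.disjoint_of_nodup_append hnd' h (List.mem_cons_self)
    have hwne₁ : w ∉ e₁ := by
      intro h
      have hnd' : (s₁ ++ w :: e₁).Nodup := hr1eq ▸ hndr₁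
      exact List.disjoint_of_nodup_append (by simpa using hnd' :
        ((s₁ ++ [w]) ++ e₁).Nodup) (List.mem_append_right _ (List.mem_cons_self)) h
    -- second-element decompositions
    obtain ⟨z₁, hz₁⟩ : ∃ z₁, s₁ ++ [w] = a :: z₁ := by
      have h0 : s₁ ++ w :: e₁ = a :: r₁' := by rw [← hr1eq, hr₁a]
      cases s₁ with
      | nil =>
        simp only [List.nil_append, List.cons.injEq] at h0
        exact ⟨[], by rw [h0.1]; rfl⟩
      | cons x s₁' =>
        simp only [List.cons_append, List.cons.injEq] at h0
        exact ⟨s₁' ++ [w], by rw [← h0.1]; rfl⟩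
    obtain ⟨z₂, hz₂⟩ : ∃ z₂, s₂ ++ [w] = b :: z₂ := by
      have h0 : s₂ ++ w :: e₂ = b :: r₂' := by rw [← hr2eq, hr₂b]
      cases s₂ with
      | nil =>
        simp only [List.nil_append, List.cons.injEq] at h0
        exact ⟨[], by rw [h0.1]; rfl⟩
      | cons x s₂' =>
        simp only [List.cons_append, List.cons.injEq] at h0
        exact ⟨s₂' ++ [w], by rw [← h0.1]; rfl⟩
    -- l₁' and l₂' facts
    have hP₁eq : c ++ v :: r₁ = c ++ (v :: (s₁ ++ [w])) ++ e₁ := by rw [hr1eq]; simp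
    have hP₂eq : c ++ v :: r₂ = c ++ (v :: (s₂ ++ [w])) ++ e₂ := by rw [hr2eq]; simp
    have harcl₁P₁ : ∀ p ∈ arcsOf (v :: (s₁ ++ [w])), p ∈ arcsOf (c ++ v :: r₁) := by
      intro p hp
      rw [hP₁eq]
      exact aux_arcsOf_sub c _ e₁ p hp
    have harcl₂P₂ : ∀ p ∈ arcsOf (v :: (s₂ ++ [w])), p ∈ arcsOf (c ++ v :: r₂) := by
      intro p hp
      rw [hP₂eq]
      exact aux_arcsOf_sub c _ e₂ p hp
    have hndl₁ : (v :: (s₁ ++ [w])).Nodup := by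
      apply List.Sublist.nodup _ hndvr₁
      rw [hr1eq]
      exact ((List.Sublist.cons₂ w (List.nil_sublist e₁)).append_left s₁).cons₂ v
    have hndl₂ : (v :: (s₂ ++ [w])).Nodup := by
      apply List.Sublist.nodup _ hndvr₂
      rw [hr2eq]
      exact ((List.Sublist.cons₂ w (List.nil_sublist e₂)).append_left s₂).cons₂ v
    have hlastl₁ : (v :: (s₁ ++ [w])).getLast? = some w := by
      rw [show v :: (s₁ ++ [w]) = (v :: s₁) ++ [w] by simp]
      exact List.getLast?_concat
    have hlastl₂ : (v :: (s₂ ++ [w])).getLast? = some w := by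
      rw [show v :: (s₂ ++ [w]) = (v :: s₂) ++ [w] by simp]
      exact List.getLast?_concat
    have hvns₁ : v ∉ s₁ := fun h => hvr₁ (by rw [hr1eq]; exact List.mem_append_left _ h)
    have hvns₂ : v ∉ s₂ := fun h => hvr₂ (by rw [hr2eq]; exact List.mem_append_left _ h)
    have hva₁ : (v, a) ∈ arcsOf (v :: (s₁ ++ [w])) := by
      rw [hz₁, aux_arcsOf_cons_cons]
      exact List.mem_cons_self
    have hvb₂ : (v, b) ∈ arcsOf (v :: (s₂ ++ [w])) := by
      rw [hz₂, aux_arcsOf_cons_cons]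
      exact List.mem_cons_self
    have hvaP₁ : (v, a) ∈ arcsOf (c ++ v :: r₁) :=
      aux_mem_arcsOf.mpr ⟨c, r₁', by rw [hr₁a]⟩
    have hvbP₂ : (v, b) ∈ arcsOf (c ++ v :: r₂) :=
      aux_mem_arcsOf.mpr ⟨c, r₂', by rw [hr₂b]⟩
    -- arcs of l₁' avoid S
    have harc₁ : ∀ p ∈ arcsOf (v :: (s₁ ++ [w])), p ∈ A \ S := by
      rintro ⟨u, u'⟩ hp
      have hpP₁ := harcl₁P₁ _ hp
      refine ⟨ha₁ _ hpP₁, ?_⟩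
      intro hpS
      have hnotP₂ : (u, u') ∉ arcsOf (c ++ v :: r₂) := by
        intro hpP₂
        have huw : u ≠ w := aux_arc_fst_ne_last hndl₁ hlastl₁ hp
        have humem : u ∈ v :: (s₁ ++ [w]) := by
          obtain ⟨p, q, heq⟩ := aux_mem_arcsOf.mp hp
          rw [heq]
          exact List.mem_append_right _ (List.mem_cons_self)
        rcases List.mem_cons.mp humem with h | h
        · -- u = v, so u' = a, and (v,a) ∈ arcsOf P₂ forces a = b
          have hu'a : u' = a := aux_out_unique hndl₁ (h ▸ hp) hva₁
          have : a = b := by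
            apply aux_out_unique hnd₂ _ hvbP₂
            rw [h, hu'a] at hpP₂
            exact hpP₂
          exact hab this
        · rcases List.mem_append.mp h with h | h
          · -- u ∈ s₁
            have huP₂ : u ∈ c ++ v :: r₂ := by
              obtain ⟨p, q, heq⟩ := aux_mem_arcsOf.mp hpP₂
              rw [heq]
              exact List.mem_append_right _ (List.mem_cons_self)
            rcases List.mem_append.mp huP₂ with h' | h'
            · exact hdisc₁ h' (List.mem_cons_of_mem _
                (by rw [hr1eq]; exact List.mem_append_left _ h))
            · rcases List.mem_cons.mp h' with h'' | h''
              · exact hvns₁ (h'' ▸ h)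
              · exact hs₁ u h h''
          · exact huw (by simpa using h)
      have h0 := hcon _ hpS
      unfold pathVec at h0
      rw [if_pos hpP₁, if_neg hnotP₂] at h0
      exact one_ne_zero h0
    -- arcs of l₂' avoid S
    have harc₂ : ∀ p ∈ arcsOf (v :: (s₂ ++ [w])), p ∈ A \ S := by
      rintro ⟨u, u'⟩ hp
      have hpP₂ := harcl₂P₂ _ hp
      refine ⟨ha₂ _ hpP₂, ?_⟩
      intro hpS
      have hnotP₁ : (u, u') ∉ arcsOf (c ++ v :: r₁) := by
        intro hpP₁
        have huw : u ≠ w := aux_arc_fst_ne_last hndl₂ hlastl₂ hp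
        have humem : u ∈ v :: (s₂ ++ [w]) := by
          obtain ⟨p, q, heq⟩ := aux_mem_arcsOf.mp hp
          rw [heq]
          exact List.mem_append_right _ (List.mem_cons_self)
        rcases List.mem_cons.mp humem with h | h
        · have hu'b : u' = b := aux_out_unique hndl₂ (h ▸ hp) hvb₂
          have : a = b := by
            apply aux_out_unique hnd₁ hvaP₁
            rw [h, hu'b] at hpP₁
            exact hpP₁
          exact hab this
        · rcases List.mem_append.mp h with h | h
          · -- u ∈ s₂
            have hur₂ : u ∈ r₂ := by rw [hr2eq]; exact List.mem_append_left _ h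
            have huP₁ : u ∈ c ++ v :: r₁ := by
              obtain ⟨p, q, heq⟩ := aux_mem_arcsOf.mp hpP₁
              rw [heq]
              exact List.mem_append_right _ (List.mem_cons_self)
            rcases List.mem_append.mp huP₁ with h' | h'
            · exact hdisc₂ h' (List.mem_cons_of_mem _ hur₂)
            · rcases List.mem_cons.mp h' with h'' | h''
              · exact hvr₂ (h'' ▸ hur₂)
              · -- u ∈ r₁
                rw [hr1eq] at h''
                rcases List.mem_append.mp h'' with h3 | h3
                · exact hs₁ u h3 hur₂
                · rcases List.mem_cons.mp h3 with h4 | h4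
                  · exact hwns₂ (h4 ▸ h)
                  · -- u ∈ e₁ : acyclicity argument
                    have harcwe₁ : ∀ p ∈ arcsOf (w :: e₁), p ∈ A := by
                      intro p hp'
                      apply ha₁
                      have h5 := aux_arcsOf_sub (c ++ v :: s₁) (w :: e₁) [] p hp'
                      have h6 : (c ++ v :: s₁) ++ (w :: e₁) ++ [] = c ++ v :: r₁ := by
                        rw [hr1eq]; simp
                      rw [h6] at h5
                      exact h5
                    obtain ⟨mm1, hwk1⟩ := aux_walk_from harcwe₁ rfl
                      (List.mem_cons_of_mem _ h4)
                    have harcl₂A : ∀ p ∈ arcsOf (v :: (s₂ ++ [w])), p ∈ A :=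
                      fun p hp' => ha₂ _ (harcl₂P₂ _ hp')
                    obtain ⟨mm2, hwk2⟩ := aux_walk_to harcl₂A hlastl₂
                      (List.mem_cons_of_mem _ (List.mem_append_left _ h))
                    exact aux_two_walks hacyc huw hwk2 hwk1
          · exact huw (by simpa using h)
      have h0 := hcon _ hpS
      unfold pathVec at h0
      rw [if_neg hnotP₁, if_pos hpP₂] at h0
      exact one_ne_zero h0.symm
    refine ⟨v, w, v :: (s₁ ++ [w]), v :: (s₂ ++ [w]),
      ⟨hndl₁, rfl, hlastl₁, harc₁⟩, ⟨hndl₂, rfl, hlastl₂, harc₂⟩, ?_, ?_⟩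
    · intro h
      have h1 : s₁ ++ [w] = s₂ ++ [w] := by
        have := List.cons.injEq v (s₁ ++ [w]) v (s₂ ++ [w]) ▸ h
        exact this.2
      rw [hz₁, hz₂] at h1
      exact hab (List.cons.injEq .. ▸ h1).1
    · intro u hu1 hu2
      rcases List.mem_cons.mp hu1 with h | h
      · exact Or.inl h
      rcases List.mem_append.mp h with h | h
      · rcases List.mem_cons.mp hu2 with h' | h'
        · exact Or.inl h'
        · rcases List.mem_append.mp h' with h' | h'
          · exact absurd (by rw [hr2eq]; exact List.mem_append_left _ h' : u ∈ r₂) (hs₁ u h)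
          · exact Or.inr (by simpa using h')
      · exact Or.inr (by simpa using h)
end

section
/- Let G = (V, E) be a directed acyclic graph and let s, t ∈ V. Let S be a minimum-cardinality identifying set for X^path_{G,s,t} and let S' be a minimum-cardinality identifying set for X^flow_{G,s,t}. Then |S'| ≤ (|S| + 1)·|S| / 2. -/
open Module



namespace Stmt9

/-- auxiliary indicator vector -/
def dvec {E : Type*} [DecidableEq E] (e : E) : E → ℝ := fun e' => if e' = e then 1 else 0

def indL {E : Type*} [DecidableEq E] (L : List E) : E → ℝ := (L.map dvec).sum

def glue {V : Type*} (u w : List V) : List (V × V) :=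
  match u.getLast?, w.head? with
  | some c, some d => [(c,d)]
  | _, _ => []

variable {V : Type*}

theorem arcsOf_nil : arcsOf ([] : List V) = [] := rfl
theorem arcsOf_single (a : V) : arcsOf [a] = [] := rfl
theorem arcsOf_cons_cons (a b : V) (t : List V) :
    arcsOf (a :: b :: t) = (a, b) :: arcsOf (b :: t) := rfl

theorem glue_nil_left (w : List V) : glue ([] : List V) w = [] := by
  simp [glue]

theorem glue_nil_right (u : List V) : glue u ([] : List V) = [] := by
  cases h : u.getLast? <;> simp [glue, h]

theorem glue_cons (u : List V) (d : V) (w : List V) (hu : u ≠ []) :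
    glue u (d :: w) = [(u.getLast hu, d)] := by
  simp [glue, List.getLast?_eq_getLast hu]

theorem glue_ne (u w : List V) (hu : u ≠ []) (hw : w ≠ []) :
    glue u w = [(u.getLast hu, w.head hw)] := by
  simp [glue, List.getLast?_eq_getLast hu, List.head?_eq_head hw]

theorem arcsOf_append (u w : List V) :
    arcsOf (u ++ w) = arcsOf u ++ glue u w ++ arcsOf w := by
  induction u with
  | nil => simp [glue_nil_left, arcsOf_nil]
  | cons c u ih =>
    cases u with
    | nil =>
      cases w with
      | nil => simp [glue_nil_right, arcsOf_single, arcsOf_nil]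
      | cons d w' => simp [arcsOf_single, arcsOf_cons_cons, glue_cons]
    | cons c2 u' =>
      have : (c :: c2 :: u') ++ w = c :: ((c2 :: u') ++ w) := by simp
      rw [this]
      have h2 : ((c2 :: u') ++ w) = c2 :: (u' ++ w) := by simp
      rw [h2, arcsOf_cons_cons, ← h2, ih, arcsOf_cons_cons]
      have : glue (c :: c2 :: u') w = glue (c2 :: u') w := by
        simp [glue, List.getLast?_cons_cons]
      rw [this]
      simp

theorem mem_arcsOf {p : V × V} : ∀ {l : List V}, p ∈ arcsOf l → p.1 ∈ l ∧ p.2 ∈ l := by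
  intro l
  induction l with
  | nil => intro h; simp [arcsOf_nil] at h
  | cons a t ih =>
    intro h
    cases t with
    | nil => simp [arcsOf_single] at h
    | cons b t' =>
      rw [arcsOf_cons_cons] at h
      rcases List.mem_cons.mp h with h | h
      · subst h; simp
      · have := ih h; exact ⟨by simp [this.1], by simp [this.2]⟩

theorem nodup_arcsOf : ∀ {l : List V}, l.Nodup → (arcsOf l).Nodup := by
  intro l
  induction l with
  | nil => intro _; simp [arcsOf_nil]
  | cons a t ih =>
    intro h
    cases t with
    | nil => simp [arcsOf_single]
    | cons b t' =>
      rw [arcsOf_cons_cons]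
      have ha : a ∉ (b :: t') := (List.nodup_cons.mp h).1
      refine List.nodup_cons.mpr ⟨?_, ih (List.nodup_cons.mp h).2⟩
      intro hmem
      exact ha (mem_arcsOf hmem).1

theorem arcs_chain'_iff (A : Set (V × V)) :
    ∀ (l : List V), (∀ p ∈ arcsOf l, p ∈ A) ↔ l.IsChain (fun u v => (u, v) ∈ A) := by
  intro l
  induction l with
  | nil => simp [arcsOf_nil, List.isChain_nil]
  | cons a t ih =>
    cases t with
    | nil => simp [arcsOf_single, List.isChain_singleton]
    | cons b t' =>
      rw [arcsOf_cons_cons, List.isChain_cons_cons, ← ih]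
      constructor
      · intro h; exact ⟨h _ (by simp), fun p hp => h p (by simp [hp])⟩
      · rintro ⟨h1, h2⟩ p hp
        rcases (List.mem_cons).mp hp with h | h
        · subst h; exact h1
        · exact h2 p h

theorem pairwise_arcsOf_of_pairwise {R : V → V → Prop} :
    ∀ {l : List V}, l.Pairwise R → (arcsOf l).Pairwise (fun p q => R p.1 q.1) := by
  intro l
  induction l with
  | nil => intro _; simp [arcsOf_nil]
  | cons a t ih =>
    intro h
    cases t with
    | nil => simp [arcsOf_single]
    | cons b t' =>
      rw [arcsOf_cons_cons]
      refine List.pairwise_cons.mpr ⟨?_, ih (List.pairwise_cons.mp h).2⟩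
      intro q hq
      exact (List.pairwise_cons.mp h).1 _ (mem_arcsOf hq).1

theorem rel_of_mem_arcsOf_of_pairwise {R : V → V → Prop} :
    ∀ {l : List V}, l.Pairwise R → ∀ {p : V × V}, p ∈ arcsOf l → R p.1 p.2 := by
  intro l
  induction l with
  | nil => intro _ p hp; simp [arcsOf_nil] at hp
  | cons a t ih =>
    intro h p hp
    cases t with
    | nil => simp [arcsOf_single] at hp
    | cons b t' =>
      rw [arcsOf_cons_cons] at hp
      rcases List.mem_cons.mp hp with hp | hp
      · subst hp; exact (List.pairwise_cons.mp h).1 _ (by simp)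
      · exact ih (List.pairwise_cons.mp h).2 hp

theorem arcsOf_infix_subset {l₁ l₂ : List V} (h : l₁ <:+: l₂) :
    ∀ p ∈ arcsOf l₁, p ∈ arcsOf l₂ := by
  obtain ⟨u, w, rfl⟩ := h
  intro p hp
  have h1 : u ++ l₁ ++ w = u ++ (l₁ ++ w) := by simp
  rw [h1, arcsOf_append u (l₁ ++ w), arcsOf_append l₁ w]
  simp only [List.mem_append]
  tauto

theorem mem_arcsOf_cons_head (v : V) :
    ∀ (w : List V) (hw : w ≠ []), (v, w.head hw) ∈ arcsOf (v :: w) := by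
  intro w hw
  cases w with
  | nil => exact absurd rfl hw
  | cons d w' => rw [arcsOf_cons_cons]; simp

theorem telescope {M : Type*} [AddCommGroup M] (f : V → M) :
    ∀ (m : List V) (a : V),
      ((arcsOf (a :: m)).map (fun p => f p.1 - f p.2)).sum
        = f a - f ((a :: m).getLast (List.cons_ne_nil a m)) := by
  intro m
  induction m with
  | nil => intro a; simp [arcsOf_single]
  | cons b m' ih =>
    intro a
    rw [arcsOf_cons_cons]
    simp only [List.map_cons, List.sum_cons]
    rw [ih b]
    rw [List.getLast_cons (List.cons_ne_nil b m')]
    abel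

theorem indL_append {E : Type*} [DecidableEq E] (L1 L2 : List E) :
    indL (L1 ++ L2) = indL L1 + indL L2 := by
  simp [indL]

theorem indL_eq {E : Type*} [DecidableEq E] {L : List E} (h : L.Nodup) :
    indL L = fun e => if e ∈ L then 1 else 0 := by
  induction L with
  | nil => funext e; simp [indL]
  | cons a L ih =>
    have h2 := (List.nodup_cons.mp h).2
    have ha := (List.nodup_cons.mp h).1
    funext e
    simp only [indL, List.map_cons, List.sum_cons]
    have := congrFun (ih h2) e
    simp only [indL] at this
    by_cases he : e = a
    · subst he
      simp [dvec, this, ha]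
    · simp [dvec, he, this]



theorem exists_dup_split {l : List V} (h : ¬ l.Nodup) :
    ∃ (p : List V) (x : V) (q r : List V), l = p ++ x :: q ++ x :: r := by
  induction l with
  | nil => exact absurd List.nodup_nil h
  | cons a t ih =>
    by_cases ha : a ∈ t
    · obtain ⟨s, u, rfl⟩ := List.append_of_mem ha
      exact ⟨[], a, s, u, by simp⟩
    · have : ¬ t.Nodup := fun hn => h (List.nodup_cons.mpr ⟨ha, hn⟩)
      obtain ⟨p, x, q, r, rfl⟩ := ih this
      exact ⟨a :: p, x, q, r, by simp⟩

/-- From any closed walk, extract a nodup cycle. -/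
theorem cycle_extract (A : Set (V × V)) :
    ∀ (n : ℕ) (a : V) (m : List V), m.length ≤ n →
      (∀ p ∈ arcsOf (a :: (m ++ [a])), p ∈ A) →
      ∃ (b : V) (l' : List V), (b :: l').Nodup ∧
        ∀ p ∈ arcsOf (b :: (l' ++ [b])), p ∈ A := by
  intro n
  induction n with
  | zero =>
    intro a m hm harcs
    have : m = [] := List.length_eq_zero_iff.mp (Nat.le_zero.mp hm)
    subst this
    exact ⟨a, [], by simp, harcs⟩
  | succ n ih =>
    intro a m hm harcs
    by_cases h : (a :: m).Nodup
    · exact ⟨a, m, h, harcs⟩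
    · obtain ⟨p, x, q, r, heq⟩ := exists_dup_split h
      -- new closed walk: x :: (q ++ [x]) is an infix of a :: (m ++ [a])
      have hinfix : (x :: q ++ [x]) <:+: (a :: (m ++ [a])) := by
        have : a :: (m ++ [a]) = (a :: m) ++ [a] := by simp
        rw [this, heq]
        exact ⟨p, r ++ [a], by simp⟩
      have harcs' : ∀ pp ∈ arcsOf (x :: (q ++ [x])), pp ∈ A := by
        intro pp hpp
        exact harcs pp (arcsOf_infix_subset hinfix pp (by simpa using hpp))
      have hlen : q.length ≤ n := by
        have : (a :: m).length = (p ++ x :: q ++ x :: r).length := by rw [heq]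
        simp at this
        omega
      exact ih x q hlen harcs'

structure Topo (V : Type*) (A : Set (V × V)) where
  lt : V → V → Prop
  trans : ∀ {a b c}, lt a b → lt b c → lt a c
  asymm : ∀ {a b}, lt a b → ¬ lt b a
  arc : ∀ {a b}, (a, b) ∈ A → lt a b

theorem topo_exists {A : Set (V × V)} (hacyc : IsAcyclicDigraph A) :
    Nonempty (Topo V A) := by
  classical
  set reach := Relation.ReflTransGen (fun u v => (u, v) ∈ A) with hreach
  -- reach gives walks
  have reach_walk : ∀ {u v : V}, reach u v →
      ∃ m : List V, (∀ p ∈ arcsOf (u :: m), p ∈ A) ∧ (u :: m).getLast (by simp) = v := by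
    intro u v h
    induction h with
    | refl => exact ⟨[], by simp [arcsOf_single], by simp⟩
    | tail hr hstep ih =>
      rename_i b c
      obtain ⟨m, hm, hlast⟩ := ih
      refine ⟨m ++ [c], ?_, by simp⟩
      intro p hp
      have : u :: (m ++ [c]) = (u :: m) ++ [c] := by simp
      rw [this, arcsOf_append] at hp
      simp only [List.mem_append] at hp
      rcases hp with (hp | hp) | hp
      · exact hm p hp
      · rw [glue_cons _ _ _ (by simp)] at hp
        simp at hp
        rw [hp, hlast]
        exact hstep
      · simp [arcsOf_single] at hp
  have antis : ∀ {u v : V}, reach u v → reach v u → u = v := by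
    intro u v huv hvu
    by_contra hne
    obtain ⟨m₁, hm₁, hl₁⟩ := reach_walk huv
    obtain ⟨m₂, hm₂, hl₂⟩ := reach_walk hvu
    have hm₂ne : m₂ ≠ [] := by
      intro h; subst h; simp at hl₂; exact hne hl₂.symm
    obtain ⟨m₂', rfl⟩ : ∃ m₂', m₂ = m₂' ++ [u] := by
      refine ⟨m₂.dropLast, ?_⟩
      have := List.dropLast_append_getLast hm₂ne
      have hlast2 : m₂.getLast hm₂ne = u := by
        rw [List.getLast_cons hm₂ne] at hl₂; exact hl₂
      rw [← hlast2]; exact this.symm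
    -- combined : u :: (m₁ ++ m₂' ++ [u])
    have harcs : ∀ p ∈ arcsOf (u :: ((m₁ ++ m₂') ++ [u])), p ∈ A := by
      have key : u :: ((m₁ ++ m₂') ++ [u]) = (u :: m₁) ++ (m₂' ++ [u]) := by simp
      intro p hp
      rw [key, arcsOf_append] at hp
      simp only [List.mem_append] at hp
      rcases hp with (hp | hp) | hp
      · exact hm₁ p hp
      · rw [glue_ne _ _ (by simp) (by simp)] at hp
        simp at hp
        subst hp
        have hmem : ((v : V), (m₂' ++ [u]).head (by simp)) ∈ arcsOf (v :: (m₂' ++ [u])) :=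
          mem_arcsOf_cons_head v _ (by simp)
        have hgl : (u :: m₁).getLast (by simp) = v := hl₁
        rw [hgl]
        exact hm₂ _ hmem
      · have : arcsOf (m₂' ++ [u]) ⊆ arcsOf (v :: (m₂' ++ [u])) := by
          intro q hq
          exact arcsOf_infix_subset ⟨[v], [], by simp⟩ q hq
        exact hm₂ p (this hp)
    obtain ⟨b, l', hnodup, hb⟩ := cycle_extract A (m₁ ++ m₂').length u (m₁ ++ m₂') le_rfl harcs
    exact hacyc ⟨b, l', hnodup, hb⟩
  -- partial order
  haveI : IsRefl V reach := ⟨fun a => Relation.ReflTransGen.refl⟩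
  haveI : IsTrans V reach := ⟨fun a b c hab hbc => Relation.ReflTransGen.trans hab hbc⟩
  haveI : IsPreorder V reach := ⟨⟩
  haveI : IsAntisymm V reach := ⟨fun a b hab hba => antis hab hba⟩
  haveI : IsPartialOrder V reach := ⟨⟩
  obtain ⟨so, hso, hle⟩ := extend_partialOrder reach
  refine ⟨⟨fun u v => so u v ∧ u ≠ v, ?_, ?_, ?_⟩⟩
  · intro a b c hab hbc
    refine ⟨hso.trans _ _ _ hab.1 hbc.1, ?_⟩
    intro h; subst h
    exact hbc.2 (hso.antisymm _ _ hbc.1 hab.1)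
  · intro a b hab hba
    exact hab.2 (hso.antisymm _ _ hab.1 hba.1)
  · intro a b hab
    have hr : reach a b := Relation.ReflTransGen.single hab
    refine ⟨hle _ _ hr, ?_⟩
    intro h; subst h
    exact hacyc ⟨a, [], by simp, by intro p hp; simp [arcsOf_cons_cons, arcsOf_single] at hp; rw [hp]; exact hab⟩

variable {A : Set (V × V)}

theorem pairwise_of_arcs (τ : Topo V A) {l : List V} (h : ∀ p ∈ arcsOf l, p ∈ A) :
    l.Pairwise τ.lt := by
  have hch : l.IsChain (fun u v => (u, v) ∈ A) := (arcs_chain'_iff A l).mp h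
  have hch2 : l.IsChain τ.lt := List.IsChain.imp (fun a b hab => τ.arc hab) hch
  haveI : IsTrans V τ.lt := ⟨fun a b c hab hbc => τ.trans hab hbc⟩
  exact List.isChain_iff_pairwise.mp hch2

theorem nodup_of_pairwise_lt (τ : Topo V A) {l : List V} (h : l.Pairwise τ.lt) : l.Nodup := by
  refine List.Pairwise.imp ?_ h
  intro a b hab
  intro hh; subst hh; exact τ.asymm hab hab

theorem nodup_of_arcs (τ : Topo V A) {l : List V} (h : ∀ p ∈ arcsOf l, p ∈ A) : l.Nodup :=
  nodup_of_pairwise_lt τ (pairwise_of_arcs τ h)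

section Flows

variable [Fintype V] [DecidableEq V]

/-- excess of a vector at a vertex -/
def exc (x : (V × V) → ℝ) : V → ℝ := fun v => (∑ w, x (v, w)) - (∑ u, x (u, v))

theorem exc_add (x y : (V × V) → ℝ) : exc (x + y) = exc x + exc y := by
  funext v
  simp [exc, Finset.sum_add_distrib]
  ring

theorem exc_zero : exc (0 : (V × V) → ℝ) = 0 := by
  funext v; simp [exc]

theorem exc_sub (x y : (V × V) → ℝ) : exc (x - y) = exc x - exc y := by
  funext v
  simp [exc, Finset.sum_sub_distrib]
  ring

theorem exc_smul (c : ℝ) (x : (V × V) → ℝ) : exc (c • x) = c • exc x := by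
  funext v
  simp [exc, ← Finset.mul_sum]
  ring

theorem exc_dvec (a b : V) : exc (dvec (a, b)) = dvec a - dvec b := by
  funext v
  simp only [exc, dvec, Prod.mk.injEq, Pi.sub_apply]
  have h1 : (∑ w, if v = a ∧ w = b then (1:ℝ) else 0) = if v = a then 1 else 0 := by
    by_cases hv : v = a
    · simp [hv]
    · simp [hv]
  have h2 : (∑ u, if u = a ∧ v = b then (1:ℝ) else 0) = if v = b then 1 else 0 := by
    by_cases hv : v = b
    · simp [hv]
    · simp [hv]
  have e1 : ∀ w, ((v, w) = (a, b)) = (v = a ∧ w = b) := by intro w; simp [Prod.ext_iff]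
  have e2 : ∀ u, ((u, v) = (a, b)) = (u = a ∧ v = b) := by intro u; simp [Prod.ext_iff]
  simp only [e1, e2] at *
  rw [h1, h2]

theorem exc_indL (L : List (V × V)) :
    exc (indL L) = (L.map (fun p => dvec p.1 - dvec p.2)).sum := by
  induction L with
  | nil => simp [indL, exc_zero]
  | cons p L ih =>
    simp only [indL, List.map_cons, List.sum_cons] at *
    rw [exc_add, ih]
    obtain ⟨a, b⟩ := p
    rw [exc_dvec]

theorem pathVec_eq_indL {l : List V} (h : l.Nodup) : pathVec l = indL (arcsOf l) := by
  rw [indL_eq (nodup_arcsOf h)]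
  funext e
  by_cases he : e ∈ arcsOf l <;> simp [pathVec, he]

theorem exc_pathVec {A : Set (V × V)} {s t : V} {l : List V} (h : IsPathOn A s t l) :
    exc (pathVec l) = dvec s - dvec t := by
  obtain ⟨hnd, hhd, hlast, _⟩ := h
  cases l with
  | nil => simp at hhd
  | cons a m =>
    have ha : a = s := by simpa using hhd
    subst ha
    rw [pathVec_eq_indL hnd, exc_indL, telescope (dvec) m a]
    have : (a :: m).getLast (List.cons_ne_nil a m) = t := by
      rw [List.getLast?_eq_getLast (List.cons_ne_nil a m)] at hlast
      simpa using hlast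
    rw [this]

theorem XFlow_exc {A : Set (V × V)} {s t : V} {x : (V × V) → ℝ} (hx : x ∈ XFlow A s t) :
    ∀ v, exc x v = if v = s then 1 else if v = t then -1 else 0 :=
  hx.2.2

theorem XFlow_ne {A : Set (V × V)} {s t : V} {x : (V × V) → ℝ} (hx : x ∈ XFlow A s t) :
    s ≠ t := by
  intro hst
  have hexc := XFlow_exc hx
  have hsum : ∑ v, exc x v = 0 := by
    simp only [exc, Finset.sum_sub_distrib]
    rw [Finset.sum_comm]
    exact sub_self _
  rw [Finset.sum_congr rfl (fun v _ => hexc v)] at hsum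
  subst hst
  have hites : ∀ v : V, (if v = s then (1:ℝ) else if v = s then -1 else 0)
      = if v = s then 1 else 0 := by
    intro v; by_cases hv : v = s <;> simp [hv]
  rw [Finset.sum_congr rfl (fun v _ => hites v)] at hsum
  simp at hsum

open Classical in
/-- measure for induction along a topological order -/
noncomputable def mes {A : Set (V × V)} (τ : Topo V A) (v : V) : ℕ :=
  (Finset.univ.filter (fun u => τ.lt v u)).card

theorem mes_lt {A : Set (V × V)} (τ : Topo V A) {v w : V} (h : τ.lt v w) :
    mes τ w < mes τ v := by
  classical
  unfold mes
  apply Finset.card_lt_card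
  constructor
  · intro u hu
    simp only [Finset.mem_filter, Finset.mem_univ, true_and] at *
    exact τ.trans h hu
  · intro hsub
    have : w ∈ Finset.univ.filter (fun u => τ.lt v u) := by
      simp only [Finset.mem_filter, Finset.mem_univ, true_and]; exact h
    have hw := hsub this
    simp only [Finset.mem_filter, Finset.mem_univ, true_and] at hw
    exact τ.asymm hw hw

theorem walk_support {A : Set (V × V)} {s t : V} (τ : Topo V A) {x : (V × V) → ℝ}
    (hx : x ∈ XFlow A s t) :
    ∀ (n : ℕ) (v : V), mes τ v ≤ n → v ≠ t → (0 < ∑ w, x (v, w)) →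
      ∃ m : List V, m ≠ [] ∧ ((v :: m).getLast (by simp)) = t ∧
        ∀ p ∈ arcsOf (v :: m), 0 < x p := by
  obtain ⟨hnn, hA, hexc⟩ := hx
  intro n
  induction n with
  | zero =>
    intro v hm hv hout
    obtain ⟨w, hw⟩ : ∃ w, 0 < x (v, w) := by
      by_contra hco
      push_neg at hco
      have : ∀ w, x (v, w) = 0 := fun w => le_antisymm (hco w) (hnn _)
      simp [this] at hout
    have harc : (v, w) ∈ A := by
      by_contra hc; rw [hA _ hc] at hw; exact lt_irrefl _ hw
    have := mes_lt τ (τ.arc harc)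
    omega
  | succ n ih =>
    intro v hm hv hout
    obtain ⟨w, hw⟩ : ∃ w, 0 < x (v, w) := by
      by_contra hco
      push_neg at hco
      have : ∀ w, x (v, w) = 0 := fun w => le_antisymm (hco w) (hnn _)
      simp [this] at hout
    have harc : (v, w) ∈ A := by
      by_contra hc; rw [hA _ hc] at hw; exact lt_irrefl _ hw
    by_cases hwt : w = t
    · subst hwt
      exact ⟨[w], by simp, by simp, by
        intro p hp
        rw [arcsOf_cons_cons] at hp
        simp only [arcsOf_single] at hp
        simp at hp
        rw [hp]; exact hw⟩
    · have hin : 0 < ∑ u, x (u, w) := by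
        have : x (v, w) ≤ ∑ u, x (u, w) :=
          Finset.single_le_sum (fun u _ => hnn (u, w)) (Finset.mem_univ v)
        linarith
      have hout' : 0 < ∑ z, x (w, z) := by
        have he := hexc w
        by_cases hws : w = s
        · rw [if_pos hws] at he
          have h2 : (∑ z, x (w, z)) = (∑ u, x (u, w)) + 1 := by linarith
          have : (0:ℝ) ≤ ∑ u, x (u, w) :=
            Finset.sum_nonneg (fun u _ => hnn (u, w))
          linarith
        · rw [if_neg hws, if_neg hwt] at he
          linarith
      have hmw : mes τ w ≤ n := by
        have := mes_lt τ (τ.arc harc)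
        omega
      obtain ⟨m, hmne, hlast, hpos⟩ := ih w hmw hwt hout'
      refine ⟨w :: m, by simp, ?_, ?_⟩
      · rw [List.getLast_cons (by simp : w :: m ≠ [])]
        exact hlast
      · intro p hp
        rw [arcsOf_cons_cons] at hp
        rcases List.mem_cons.mp hp with hp | hp
        · rw [hp]; exact hw
        · exact hpos p hp

theorem paths_exist {A : Set (V × V)} {s t : V} (τ : Topo V A) {x : (V × V) → ℝ}
    (hx : x ∈ XFlow A s t) :
    ∃ l, IsPathOn A s t l ∧ ∀ p ∈ arcsOf l, 0 < x p := by
  have hst := XFlow_ne hx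
  obtain ⟨hnn, hA, hexc⟩ := hx
  have hout : 0 < ∑ w, x (s, w) := by
    have he := hexc s
    rw [if_pos rfl] at he
    have : (0:ℝ) ≤ ∑ u, x (u, s) := Finset.sum_nonneg (fun u _ => hnn (u, s))
    linarith
  obtain ⟨m, hmne, hlast, hpos⟩ := walk_support τ ⟨hnn, hA, hexc⟩ (mes τ s) s le_rfl hst hout
  have harcs : ∀ p ∈ arcsOf (s :: m), p ∈ A := by
    intro p hp
    by_contra hc
    have := hA _ hc
    have := hpos p hp
    linarith
  refine ⟨s :: m, ⟨nodup_of_arcs τ harcs, by simp, ?_, harcs⟩, hpos⟩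
  rw [List.getLast?_eq_getLast (by simp)]
  simpa using hlast

theorem circ_zero {A : Set (V × V)} (τ : Topo V A) {y : (V × V) → ℝ}
    (hnn : ∀ p, 0 ≤ y p) (hA : ∀ p, p ∉ A → y p = 0) (hexc : ∀ v, exc y v = 0) :
    y = 0 := by
  have key : ∀ (n : ℕ) (v : V), mes τ v ≤ n → ¬ (0 < ∑ u, y (u, v)) := by
    intro n
    induction n with
    | zero =>
      intro v hm hin
      have hout : 0 < ∑ w, y (v, w) := by
        have := hexc v; simp only [exc] at this; linarith
      obtain ⟨w, hw⟩ : ∃ w, 0 < y (v, w) := by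
        by_contra hco
        push_neg at hco
        have : ∀ w, y (v, w) = 0 := fun w => le_antisymm (hco w) (hnn _)
        simp [this] at hout
      have harc : (v, w) ∈ A := by
        by_contra hc; rw [hA _ hc] at hw; exact lt_irrefl _ hw
      have := mes_lt τ (τ.arc harc)
      omega
    | succ n ih =>
      intro v hm hin
      have hout : 0 < ∑ w, y (v, w) := by
        have := hexc v; simp only [exc] at this; linarith
      obtain ⟨w, hw⟩ : ∃ w, 0 < y (v, w) := by
        by_contra hco
        push_neg at hco
        have : ∀ w, y (v, w) = 0 := fun w => le_antisymm (hco w) (hnn _)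
        simp [this] at hout
      have harc : (v, w) ∈ A := by
        by_contra hc; rw [hA _ hc] at hw; exact lt_irrefl _ hw
      have hmw : mes τ w ≤ n := by
        have := mes_lt τ (τ.arc harc)
        omega
      refine ih w hmw ?_
      have : y (v, w) ≤ ∑ u, y (u, w) :=
        Finset.single_le_sum (fun u _ => hnn (u, w)) (Finset.mem_univ v)
      linarith
  funext p
  obtain ⟨u, v⟩ := p
  by_contra hc
  have hpos : 0 < y (u, v) := lt_of_le_of_ne (hnn _) (by simpa using (Ne.symm hc))
  have : 0 < ∑ u', y (u', v) := by
    have : y (u, v) ≤ ∑ u', y (u', v) :=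
      Finset.single_le_sum (fun u' _ => hnn (u', v)) (Finset.mem_univ u)
    linarith
  exact key (mes τ v) v le_rfl this

end Flows

section Decomp

variable [Fintype V] [DecidableEq V]

/-- span of differences of path vectors -/
def WPspan (A : Set (V × V)) (s t : V) : Submodule ℝ ((V × V) → ℝ) :=
  Submodule.span ℝ {d | ∃ p ∈ XPath A s t, ∃ q ∈ XPath A s t, d = p - q}

open Classical in
noncomputable def sc (x : (V × V) → ℝ) : ℕ :=
  (Finset.univ.filter (fun e => x e ≠ 0)).card

theorem flow_sub_path_mem {A : Set (V × V)} {s t : V} (τ : Topo V A) :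
    ∀ (n : ℕ) (x : (V × V) → ℝ), x ∈ XFlow A s t → sc x ≤ n →
      ∀ p₀ ∈ XPath A s t, x - p₀ ∈ WPspan A s t := by
  classical
  intro n
  induction n with
  | zero =>
    intro x hx hsc p₀ hp₀
    obtain ⟨l, hl, hpos⟩ := paths_exist τ hx
    -- arcs of l nonempty
    obtain ⟨hnd, hhd, hlast, harcs⟩ := hl
    have hst : s ≠ t := XFlow_ne hx
    have hne : arcsOf l ≠ [] := by
      cases l with
      | nil => simp at hhd
      | cons a m =>
        cases m with
        | nil =>
          exfalso
          have h1 : a = s := by simpa using hhd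
          have h2 : a = t := by simpa using hlast
          exact hst (h1 ▸ h2 ▸ rfl)
        | cons b m' => simp [arcsOf_cons_cons]
    obtain ⟨e₀, he₀⟩ := List.exists_mem_of_ne_nil _ hne
    have : e₀ ∈ Finset.univ.filter (fun e => x e ≠ 0) := by
      simp only [Finset.mem_filter, Finset.mem_univ, true_and]
      exact ne_of_gt (hpos _ he₀)
    have : 0 < sc x := by
      unfold sc
      exact Finset.card_pos.mpr ⟨e₀, this⟩
    omega
  | succ n ih =>
    intro x hx hsc p₀ hp₀
    obtain ⟨l, hl, hpos⟩ := paths_exist τ hx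
    have hst : s ≠ t := XFlow_ne hx
    obtain ⟨hnd, hhd, hlast, harcs⟩ := hl
    have hne : arcsOf l ≠ [] := by
      cases l with
      | nil => simp at hhd
      | cons a m =>
        cases m with
        | nil =>
          exfalso
          have h1 : a = s := by simpa using hhd
          have h2 : a = t := by simpa using hlast
          exact hst (h1 ▸ h2 ▸ rfl)
        | cons b m' => simp [arcsOf_cons_cons]
    set p : (V × V) → ℝ := pathVec l with hp
    have hppath : p ∈ XPath A s t := ⟨l, ⟨hnd, hhd, hlast, harcs⟩, rfl⟩
    have hpe1 : ∀ e ∈ arcsOf l, p e = 1 := by intro e he; simp [hp, pathVec, he]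
    have hpe0 : ∀ e, e ∉ arcsOf l → p e = 0 := by intro e he; simp [hp, pathVec, he]
    have hFane : ((arcsOf l).toFinset : Finset (V × V)).Nonempty := by
      obtain ⟨e₀, he₀⟩ := List.exists_mem_of_ne_nil _ hne
      exact ⟨e₀, by simpa using he₀⟩
    obtain ⟨e₀, he₀mem, hmin⟩ := Finset.exists_min_image _ x hFane
    have he₀ : e₀ ∈ arcsOf l := by simpa using he₀mem
    set c : ℝ := x e₀ with hc
    have hcpos : 0 < c := hpos _ he₀
    have hminle : ∀ e ∈ arcsOf l, c ≤ x e := by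
      intro e he; exact hmin e (by simpa using he)
    have hexcp : exc p = dvec s - dvec t := exc_pathVec ⟨hnd, hhd, hlast, harcs⟩
    obtain ⟨hnn, hA, hexc⟩ := hx
    by_cases hc1 : 1 ≤ c
    · -- x = p
      have hynn : ∀ e, 0 ≤ x e - p e := by
        intro e
        by_cases he : e ∈ arcsOf l
        · rw [hpe1 e he]; linarith [hminle e he]
        · rw [hpe0 e he]; simpa using hnn e
      have hyA : ∀ e, e ∉ A → x e - p e = 0 := by
        intro e heA
        rw [hA e heA, hpe0 e (fun hmem => heA (harcs e hmem))]
        ring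
      have hyexc : ∀ v, exc (x - p) v = 0 := by
        intro v
        rw [exc_sub, hexcp]
        simp only [Pi.sub_apply]
        rw [show exc x v = (if v = s then (1:ℝ) else if v = t then -1 else 0) from hexc v]
        by_cases hv : v = s
        · subst hv; simp [dvec, hst]
        · by_cases hv2 : v = t
          · subst hv2; simp [dvec, hv, Ne.symm hst]
          · simp [dvec, hv, hv2]
      have : x - p = 0 := circ_zero τ (fun e => hynn e) (fun e he => hyA e he) hyexc
      have hxp : x = p := by
        funext e
        have := congrFun this e
        simp only [Pi.sub_apply, Pi.zero_apply] at this
        linarith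
      rw [hxp]
      exact Submodule.subset_span ⟨p, hppath, p₀, hp₀, rfl⟩
    · push_neg at hc1
      have h1c : (0:ℝ) < 1 - c := by linarith
      set x' : (V × V) → ℝ := (1 - c)⁻¹ • (x - c • p) with hx'def
      have hx'e : ∀ e, x' e = (1 - c)⁻¹ * (x e - c * p e) := by
        intro e; simp [hx'def]
      have hx'nn : ∀ e, 0 ≤ x' e := by
        intro e
        rw [hx'e]
        apply mul_nonneg (by positivity)
        by_cases he : e ∈ arcsOf l
        · rw [hpe1 e he]; linarith [hminle e he]
        · rw [hpe0 e he]; simpa using hnn e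
      have hx'A : ∀ e, e ∉ A → x' e = 0 := by
        intro e heA
        rw [hx'e, hA e heA, hpe0 e (fun hmem => heA (harcs e hmem))]
        ring
      have hx'exc : ∀ v, exc x' v = if v = s then 1 else if v = t then -1 else 0 := by
        intro v
        rw [hx'def, exc_smul, exc_sub, exc_smul, hexcp]
        simp only [Pi.smul_apply, Pi.sub_apply, smul_eq_mul]
        rw [show exc x v = (if v = s then (1:ℝ) else if v = t then -1 else 0) from hexc v]
        by_cases hv : v = s
        · subst hv
          simp [dvec, hst]
          field_simp
        · by_cases hv2 : v = t
          · subst hv2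
            simp [dvec, hv, Ne.symm hst]
            field_simp
            ring
          · simp [dvec, hv, hv2]
      have hx'flow : x' ∈ XFlow A s t := ⟨hx'nn, hx'A, hx'exc⟩
      have hsupp : ∀ e, x e = 0 → x' e = 0 := by
        intro e he
        have hep : p e = 0 := by
          apply hpe0
          intro hmem
          exact absurd he (ne_of_gt (hpos _ hmem))
        rw [hx'e, he, hep]; ring
      have hx'e₀ : x' e₀ = 0 := by
        rw [hx'e, hpe1 _ he₀, ← hc]; ring
      have hsc' : sc x' ≤ n := by
        unfold sc at *
        have hss : Finset.univ.filter (fun e => x' e ≠ 0)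
            ⊆ (Finset.univ.filter (fun e => x e ≠ 0)).erase e₀ := by
          intro e he
          simp only [Finset.mem_filter, Finset.mem_univ, true_and, Finset.mem_erase] at *
          constructor
          · intro heq; subst heq; exact he hx'e₀
          · intro hxe; exact he (hsupp e hxe)
        have h1 := Finset.card_le_card hss
        have h2 : e₀ ∈ Finset.univ.filter (fun e => x e ≠ 0) := by
          simp only [Finset.mem_filter, Finset.mem_univ, true_and]
          exact ne_of_gt hcpos
        have h3 := Finset.card_erase_of_mem h2
        omega
      have hrec := ih x' hx'flow hsc' p₀ hp₀
      have hcomb : x - p₀ = c • (p - p₀) + (1 - c) • (x' - p₀) := by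
        funext e
        simp only [Pi.add_apply, Pi.sub_apply, Pi.smul_apply, smul_eq_mul]
        rw [hx'e]
        field_simp
        ring
      rw [hcomb]
      exact Submodule.add_mem _
        (Submodule.smul_mem _ _ (Submodule.subset_span ⟨p, hppath, p₀, hp₀, rfl⟩))
        (Submodule.smul_mem _ _ hrec)

theorem XFlow_diff_mem {A : Set (V × V)} {s t : V} (τ : Topo V A) {x y : (V × V) → ℝ}
    (hx : x ∈ XFlow A s t) (hy : y ∈ XFlow A s t) : x - y ∈ WPspan A s t := by
  obtain ⟨l₀, hl₀, _⟩ := paths_exist τ hx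
  have hp₀ : pathVec l₀ ∈ XPath A s t := ⟨l₀, hl₀, rfl⟩
  have h1 := flow_sub_path_mem τ (sc x) x hx le_rfl _ hp₀
  have h2 := flow_sub_path_mem τ (sc y) y hy le_rfl _ hp₀
  have : x - y = (x - pathVec l₀) - (y - pathVec l₀) := by ring
  rw [this]
  exact Submodule.sub_mem _ h1 h2

end Decomp

section Big

variable [Fintype V] [DecidableEq V]

theorem head?_append_left {u : List V} (w : List V) (h : u ≠ []) :
    (u ++ w).head? = u.head? := by
  cases u with
  | nil => exact absurd rfl h
  | cons a u' => rfl

/-- vertices of the auxiliary digraph H -/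
def hBot : Option (Option (V × V)) := none
def hTop : Option (Option (V × V)) := some none
def hNode (a : V × V) : Option (Option (V × V)) := some (some a)

def sigL (Sf : Finset (V × V)) (l : List V) : List (V × V) :=
  (arcsOf l).filter (· ∈ Sf)

def hvseq (Sf : Finset (V × V)) (l : List V) : List (Option (Option (V × V))) :=
  hBot :: ((sigL Sf l).map hNode ++ [hTop])

def PreC (Sf : Finset (V × V)) (s : V) :
    Option (Option (V × V)) → List V → List V → Prop
  | none, pre, m => pre = [] ∧ m.head? = some s
  | some none, _, _ => False
  | some (some a), pre, m => a ∈ Sf ∧ (∃ p, pre = p ++ [a.1]) ∧ m.head? = some a.2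

def PostC (Sf : Finset (V × V)) (t : V) :
    Option (Option (V × V)) → List V → List V → Prop
  | none, _, _ => False
  | some none, post, m => post = [] ∧ m.getLast? = some t
  | some (some b), post, m => b ∈ Sf ∧ (∃ q, post = b.2 :: q) ∧ m.getLast? = some b.1

def VSeg (Sf : Finset (V × V)) (s t : V) (l : List V)
    (x y : Option (Option (V × V))) (m : List V) : Prop :=
  (∃ pre post, l = pre ++ m ++ post ∧ PreC Sf s x pre m ∧ PostC Sf t y post m) ∧
    ∀ e ∈ arcsOf m, e ∉ Sf

def Qwit (A : Set (V × V)) (Sf : Finset (V × V)) (s t : V)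
    (ed : Option (Option (V × V)) × Option (Option (V × V)))
    (lm : List V × List V) : Prop :=
  IsPathOn A s t lm.1 ∧ VSeg Sf s t lm.1 ed.1 ed.2 lm.2

open Classical in
noncomputable def chSeg (A : Set (V × V)) (Sf : Finset (V × V)) (s t : V)
    (ed : Option (Option (V × V)) × Option (Option (V × V))) : List V :=
  if h : ∃ lm, Qwit A Sf s t ed lm then (Classical.choose h).2 else []

def lead : Option (Option (V × V)) → ((V × V) → ℝ)
  | some (some a) => dvec a
  | _ => 0

noncomputable def chv (A : Set (V × V)) (Sf : Finset (V × V)) (s t : V)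
    (ed : Option (Option (V × V)) × Option (Option (V × V))) : (V × V) → ℝ :=
  lead ed.1 + fun e => if e ∈ arcsOf (chSeg A Sf s t ed) then 1 else 0

def UPs (A : Set (V × V)) (Sf : Finset (V × V)) (s t : V) :
    Set (Option (Option (V × V)) × Option (Option (V × V))) :=
  {ed | ∃ l, IsPathOn A s t l ∧ ed ∈ arcsOf (hvseq Sf l)}

theorem VSeg_m_ne {Sf : Finset (V × V)} {s t : V} {l : List V}
    {x y : Option (Option (V × V))} {m : List V} (h : VSeg Sf s t l x y m) : m ≠ [] := by
  obtain ⟨⟨pre, post, heq, hpre, hpost⟩, hfree⟩ := h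
  intro hm
  subst hm
  cases x with
  | none => obtain ⟨-, h2⟩ := hpre; simp at h2
  | some o =>
    cases o with
    | none => exact hpre
    | some a => obtain ⟨-, -, h2⟩ := hpre; simp at h2

theorem arcs_decomp {m : List V} (pre post : List V) (hm : m ≠ []) :
    arcsOf (pre ++ m ++ post)
      = arcsOf pre ++ glue pre m ++ arcsOf m ++ glue m post ++ arcsOf post := by
  rw [List.append_assoc, arcsOf_append pre (m ++ post), arcsOf_append m post]
  have hg : glue pre (m ++ post) = glue pre m := by
    cases m with
    | nil => exact absurd rfl hm
    | cons a m' =>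
      show glue pre (a :: (m' ++ post)) = glue pre (a :: m')
      unfold glue
      rfl
  rw [hg]
  simp [List.append_assoc]

theorem head_eq_of_head? {m : List V} {a : V} (h : m.head? = some a) (hm : m ≠ []) :
    m.head hm = a := by
  cases m with
  | nil => exact absurd rfl hm
  | cons b m' => simpa using h

theorem getLast_eq_of_getLast? {m : List V} {a : V} (h : m.getLast? = some a) (hm : m ≠ []) :
    m.getLast hm = a := by
  rw [List.getLast?_eq_getLast hm] at h
  simpa using h

theorem glue_pre {Sf : Finset (V × V)} {s : V} {x : Option (Option (V × V))}
    {pre m : List V} (h : PreC Sf s x pre m) :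
    (x = hBot ∧ glue pre m = []) ∨
      (∃ a, x = hNode a ∧ a ∈ Sf ∧ glue pre m = [a]) := by
  cases x with
  | none =>
    left
    refine ⟨rfl, ?_⟩
    rw [h.1]
    exact glue_nil_left m
  | some o =>
    cases o with
    | none => exact absurd h (by simp [PreC])
    | some a =>
      right
      obtain ⟨haS, ⟨p, hpre⟩, hhd⟩ := h
      refine ⟨a, rfl, haS, ?_⟩
      have hmne : m ≠ [] := by intro hm; subst hm; simp at hhd
      have hprene : pre ≠ [] := by rw [hpre]; simp
      rw [glue_ne pre m hprene hmne]
      have h1 : pre.getLast hprene = a.1 :=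
        getLast_eq_of_getLast? (by rw [hpre]; simp) hprene
      rw [h1, head_eq_of_head? hhd hmne]

theorem glue_post {Sf : Finset (V × V)} {t : V} {y : Option (Option (V × V))}
    {post m : List V} (h : PostC Sf t y post m) (hm : m ≠ []) :
    (y = hTop ∧ glue m post = []) ∨
      (∃ b, y = hNode b ∧ b ∈ Sf ∧ glue m post = [b]) := by
  cases y with
  | none => exact absurd h (by simp [PostC])
  | some o =>
    cases o with
    | none =>
      left
      refine ⟨rfl, ?_⟩
      rw [h.1]
      exact glue_nil_right m
    | some b =>
      right
      obtain ⟨hbS, ⟨q, hpost⟩, hlast⟩ := h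
      refine ⟨b, rfl, hbS, ?_⟩
      have hpostne : post ≠ [] := by rw [hpost]; simp
      rw [glue_ne m post hm hpostne]
      have h1 : post.head hpostne = b.2 :=
        head_eq_of_head? (by rw [hpost]; rfl) hpostne
      rw [h1, getLast_eq_of_getLast? hlast hm]

theorem nodup_five {a b c d f : List (V × V)} (h : (a ++ b ++ c ++ d ++ f).Nodup)
    {e : V × V} (hec : e ∈ c) (hother : e ∈ a ∨ e ∈ b ∨ e ∈ d ∨ e ∈ f) : False := by
  have h5 := (List.nodup_append'.mp h).2.2
  have h' := (List.nodup_append'.mp h).1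
  have h4 := (List.nodup_append'.mp h').2.2
  have h'' := (List.nodup_append'.mp h').1
  have h3 := (List.nodup_append'.mp h'').2.2
  rcases hother with hm | hm | hm | hm
  · exact h3 (by simp [hm]) hec
  · exact h3 (by simp [hm]) hec
  · exact h4 (by simp [hec]) hm
  · exact h5 (by simp [hec]) hm

theorem PreC_head_eq {Sf : Finset (V × V)} {s : V} {x : Option (Option (V × V))}
    {pre₁ m₁ pre₂ m₂ : List V} (h₁ : PreC Sf s x pre₁ m₁) (h₂ : PreC Sf s x pre₂ m₂) :
    m₁.head? = m₂.head? := by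
  cases x with
  | none => rw [h₁.2, h₂.2]
  | some o =>
    cases o with
    | none => exact absurd h₁ (by simp [PreC])
    | some a => rw [h₁.2.2, h₂.2.2]

theorem PostC_last_eq {Sf : Finset (V × V)} {t : V} {y : Option (Option (V × V))}
    {post₁ m₁ post₂ m₂ : List V} (h₁ : PostC Sf t y post₁ m₁) (h₂ : PostC Sf t y post₂ m₂) :
    m₁.getLast? = m₂.getLast? := by
  cases y with
  | none => exact absurd h₁ (by simp [PostC])
  | some o =>
    cases o with
    | none => rw [h₁.2, h₂.2]
    | some b => rw [h₁.2.2, h₂.2.2]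

theorem glue_eq_head {u w w' : List V} (h : w.head? = w'.head?) : glue u w = glue u w' := by
  unfold glue
  rw [h]

theorem glue_eq_last {u u' w : List V} (h : u.getLast? = u'.getLast?) :
    glue u w = glue u' w := by
  unfold glue
  rw [h]

theorem lemA {A : Set (V × V)} {s t : V} (τ : Topo V A) {Sf : Finset (V × V)}
    (hid : ∀ l₁ l₂, IsPathOn A s t l₁ → IsPathOn A s t l₂ →
      (∀ e ∈ Sf, pathVec l₁ e = pathVec l₂ e) → pathVec l₁ = pathVec l₂)
    {x y : Option (Option (V × V))} {l₁ m₁ l₂ m₂ : List V}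
    (h₁ : IsPathOn A s t l₁) (hv₁ : VSeg Sf s t l₁ x y m₁)
    (h₂ : IsPathOn A s t l₂) (hv₂ : VSeg Sf s t l₂ x y m₂) :
    ∀ e, e ∈ arcsOf m₁ ↔ e ∈ arcsOf m₂ := by
  have hm₁ne := VSeg_m_ne hv₁
  have hm₂ne := VSeg_m_ne hv₂
  obtain ⟨⟨pre₁, post₁, heq₁, hpre₁, hpost₁⟩, hfree₁⟩ := hv₁
  obtain ⟨⟨pre₂, post₂, heq₂, hpre₂, hpost₂⟩, hfree₂⟩ := hv₂
  have hhdm : m₂.head? = m₁.head? := PreC_head_eq hpre₂ hpre₁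
  have hlstm : m₂.getLast? = m₁.getLast? := PostC_last_eq hpost₂ hpost₁
  set l' : List V := pre₁ ++ m₂ ++ post₁ with hl'
  have hL₁ : arcsOf l₁
      = arcsOf pre₁ ++ glue pre₁ m₁ ++ arcsOf m₁ ++ glue m₁ post₁ ++ arcsOf post₁ := by
    rw [heq₁]; exact arcs_decomp _ _ hm₁ne
  have hL₂ : arcsOf l₂
      = arcsOf pre₂ ++ glue pre₂ m₂ ++ arcsOf m₂ ++ glue m₂ post₂ ++ arcsOf post₂ := by
    rw [heq₂]; exact arcs_decomp _ _ hm₂ne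
  have hL' : arcsOf l'
      = arcsOf pre₁ ++ glue pre₁ m₁ ++ arcsOf m₂ ++ glue m₁ post₁ ++ arcsOf post₁ := by
    rw [hl', arcs_decomp _ _ hm₂ne, glue_eq_head hhdm, glue_eq_last hlstm]
  -- l' is a path
  have harcs' : ∀ p ∈ arcsOf l', p ∈ A := by
    intro p hp
    rw [hL'] at hp
    simp only [List.mem_append] at hp
    rcases hp with ((((hp | hp) | hp) | hp) | hp)
    · exact h₁.2.2.2 p (by rw [hL₁]; simp only [List.mem_append]; tauto)
    · exact h₁.2.2.2 p (by rw [hL₁]; simp only [List.mem_append]; tauto)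
    · exact h₂.2.2.2 p (by rw [hL₂]; simp only [List.mem_append]; tauto)
    · exact h₁.2.2.2 p (by rw [hL₁]; simp only [List.mem_append]; tauto)
    · exact h₁.2.2.2 p (by rw [hL₁]; simp only [List.mem_append]; tauto)
  have hnd' : l'.Nodup := nodup_of_arcs τ harcs'
  have hhd' : l'.head? = some s := by
    cases x with
    | none =>
      have hp1 : pre₁ = [] := hpre₁.1
      have hp2 : m₂.head? = some s := hpre₂.2
      rw [hl', hp1]
      simp only [List.nil_append]
      rw [head?_append_left post₁ hm₂ne]
      exact hp2
    | some o =>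
      cases o with
      | none => exact absurd hpre₁ (by simp [PreC])
      | some a =>
        obtain ⟨-, ⟨p, hp⟩, -⟩ := hpre₁
        have hprene : pre₁ ≠ [] := by rw [hp]; simp
        have e1 : l'.head? = pre₁.head? := by
          rw [hl', List.append_assoc]
          exact head?_append_left _ hprene
        have e2 : l₁.head? = pre₁.head? := by
          rw [heq₁, List.append_assoc]
          exact head?_append_left _ hprene
        rw [e1, ← e2]
        exact h₁.2.1
  have hlast' : l'.getLast? = some t := by
    cases y with
    | none => exact absurd hpost₁ (by simp [PostC])
    | some o =>
      cases o with
      | none =>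
        have hp1 : post₁ = [] := hpost₁.1
        have hp2 : m₂.getLast? = some t := hpost₂.2
        rw [hl', hp1]
        simp only [List.append_nil]
        rw [List.getLast?_append_of_ne_nil _ hm₂ne]
        exact hp2
      | some b =>
        obtain ⟨-, ⟨q, hq⟩, -⟩ := hpost₁
        have hpostne : post₁ ≠ [] := by rw [hq]; simp
        have e1 : l'.getLast? = post₁.getLast? := List.getLast?_append_of_ne_nil _ hpostne
        have e2 : l₁.getLast? = post₁.getLast? := by
          rw [heq₁]
          exact List.getLast?_append_of_ne_nil _ hpostne
        rw [e1, ← e2]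
        exact h₁.2.2.1
  have hpath' : IsPathOn A s t l' := ⟨hnd', hhd', hlast', harcs'⟩
  have hagree : ∀ e ∈ Sf, pathVec l' e = pathVec l₁ e := by
    intro e he
    have hnm₁ : e ∉ arcsOf m₁ := fun hc => hfree₁ e hc he
    have hnm₂ : e ∉ arcsOf m₂ := fun hc => hfree₂ e hc he
    have : e ∈ arcsOf l' ↔ e ∈ arcsOf l₁ := by
      rw [hL', hL₁]
      simp only [List.mem_append]
      tauto
    by_cases hmem : e ∈ arcsOf l'
    · simp [pathVec, hmem, this.mp hmem]
    · have h2 : e ∉ arcsOf l₁ := fun hc => hmem (this.mpr hc)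
      simp [pathVec, hmem, h2]
  have hpv : pathVec l' = pathVec l₁ := hid l' l₁ hpath' h₁ hagree
  have hmemiff : ∀ e : V × V, e ∈ arcsOf l' ↔ e ∈ arcsOf l₁ := by
    intro e
    have hthis := congrFun hpv e
    simp only [pathVec] at hthis
    by_cases h1 : e ∈ arcsOf l' <;> by_cases h2 : e ∈ arcsOf l₁ <;>
      simp [h1, h2] at hthis ⊢
  have hnodupL₁ : (arcsOf pre₁ ++ glue pre₁ m₁ ++ arcsOf m₁ ++ glue m₁ post₁
      ++ arcsOf post₁).Nodup := by
    rw [← hL₁]; exact nodup_arcsOf h₁.1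
  have hnodupL' : (arcsOf pre₁ ++ glue pre₁ m₁ ++ arcsOf m₂ ++ glue m₁ post₁
      ++ arcsOf post₁).Nodup := by
    rw [← hL']; exact nodup_arcsOf hnd'
  intro e
  constructor
  · intro he₁
    have heL₁ : e ∈ arcsOf l₁ := by
      rw [hL₁]; simp only [List.mem_append]; tauto
    have heL' : e ∈ arcsOf l' := (hmemiff e).mpr heL₁
    rw [hL'] at heL'
    simp only [List.mem_append] at heL'
    rcases heL' with ((((hp | hp) | hp) | hp) | hp)
    · exact absurd (Or.inl hp) (fun hc => nodup_five hnodupL₁ he₁ hc)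
    · exact absurd (Or.inr (Or.inl hp)) (fun hc => nodup_five hnodupL₁ he₁ hc)
    · exact hp
    · exact absurd (Or.inr (Or.inr (Or.inl hp))) (fun hc => nodup_five hnodupL₁ he₁ hc)
    · exact absurd (Or.inr (Or.inr (Or.inr hp))) (fun hc => nodup_five hnodupL₁ he₁ hc)
  · intro he₂
    have heL' : e ∈ arcsOf l' := by
      rw [hL']; simp only [List.mem_append]; tauto
    have heL₁ : e ∈ arcsOf l₁ := (hmemiff e).mp heL'
    rw [hL₁] at heL₁
    simp only [List.mem_append] at heL₁
    rcases heL₁ with ((((hp | hp) | hp) | hp) | hp)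
    · exact absurd (Or.inl hp) (fun hc => nodup_five hnodupL' he₂ hc)
    · exact absurd (Or.inr (Or.inl hp)) (fun hc => nodup_five hnodupL' he₂ hc)
    · exact hp
    · exact absurd (Or.inr (Or.inr (Or.inl hp))) (fun hc => nodup_five hnodupL' he₂ hc)
    · exact absurd (Or.inr (Or.inr (Or.inr hp))) (fun hc => nodup_five hnodupL' he₂ hc)

theorem VSeg_sublist {Sf : Finset (V × V)} {s t : V} {l : List V}
    {x y : Option (Option (V × V))} {m : List V} (h : VSeg Sf s t l x y m) :
    m.Sublist l := by
  obtain ⟨⟨pre, post, heq, -, -⟩, -⟩ := h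
  rw [heq, List.append_assoc]
  exact (List.sublist_append_left m post).trans (List.sublist_append_right pre _)

theorem chv_eq {A : Set (V × V)} {s t : V} (τ : Topo V A) {Sf : Finset (V × V)}
    (hid : ∀ l₁ l₂, IsPathOn A s t l₁ → IsPathOn A s t l₂ →
      (∀ e ∈ Sf, pathVec l₁ e = pathVec l₂ e) → pathVec l₁ = pathVec l₂)
    {ed : Option (Option (V × V)) × Option (Option (V × V))} {lm : List V × List V}
    (hq : Qwit A Sf s t ed lm) :
    chv A Sf s t ed = lead ed.1 + indL (arcsOf lm.2) := by
  have hex : ∃ lm', Qwit A Sf s t ed lm' := ⟨lm, hq⟩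
  have hspec := Classical.choose_spec hex
  have hiff := lemA τ hid hspec.1 hspec.2 hq.1 hq.2
  have hmnd : lm.2.Nodup := (VSeg_sublist hq.2).nodup hq.1.1
  unfold chv chSeg
  rw [dif_pos hex]
  congr 1
  rw [indL_eq (nodup_arcsOf hmnd)]
  funext e
  by_cases he : e ∈ arcsOf lm.2
  · simp [he, (hiff e).mpr he]
  · have h2 : e ∉ arcsOf (Classical.choose hex).2 := fun hc => he ((hiff e).mp hc)
    simp [he, h2]

theorem split_first (Sf : Finset (V × V)) :
    ∀ m : List V, (∀ e ∈ arcsOf m, e ∉ Sf) ∨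
      ∃ u b w, m = u ++ b.1 :: b.2 :: w ∧ b ∈ Sf ∧ (∀ e ∈ arcsOf (u ++ [b.1]), e ∉ Sf) := by
  intro m
  induction m with
  | nil => left; simp [arcsOf_nil]
  | cons c m' ih =>
    cases m' with
    | nil => left; simp [arcsOf_single]
    | cons d m'' =>
      by_cases hS : (c, d) ∈ Sf
      · right
        exact ⟨[], (c, d), m'', by simp, hS, by simp [arcsOf_single]⟩
      · rcases ih with hf | ⟨u, b, w, heq, hbS, hfree⟩
        · left
          intro e he
          rw [arcsOf_cons_cons] at he
          rcases List.mem_cons.mp he with he | he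
          · rw [he]; exact hS
          · exact hf e he
        · right
          refine ⟨c :: u, b, w, by rw [List.cons_append, heq], hbS, ?_⟩
          intro e he
          cases u with
          | nil =>
            simp only [List.nil_append] at he heq
            rw [show (c :: ([] : List V)) ++ [b.1] = [c, b.1] by simp, arcsOf_cons_cons,
              arcsOf_single] at he
            simp at he
            rw [he]
            have : d = b.1 := by
              have := heq
              simp at this
              exact this.1
            rw [← this]
            exact hS
          | cons u0 u' =>
            have : (c :: u0 :: u') ++ [b.1] = c :: (u0 :: (u' ++ [b.1])) := by simp
            rw [this, arcsOf_cons_cons] at he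
            rcases List.mem_cons.mp he with he | he
            · rw [he]
              have : d = u0 := by
                have := heq
                simp at this
                exact this.1
              rw [← this]
              exact hS
            · refine hfree e ?_
              simpa using he

theorem head?_append_cons (u : List V) (c : V) (r : List V) :
    (u ++ c :: r).head? = (u ++ [c]).head? := by
  cases u <;> rfl

theorem PreC_shift {Sf : Finset (V × V)} {s : V} {x : Option (Option (V × V))}
    {pre m m' : List V} (h : PreC Sf s x pre m) (hh : m'.head? = m.head?) :
    PreC Sf s x pre m' := by
  cases x with
  | none => exact ⟨h.1, by rw [hh]; exact h.2⟩
  | some o =>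
    cases o with
    | none => exact absurd h (by simp [PreC])
    | some a => exact ⟨h.1, h.2.1, by rw [hh]; exact h.2.2⟩

theorem indL_singleton (e : V × V) : indL [e] = dvec e := by
  simp [indL]

theorem chv_decomp {A : Set (V × V)} {s t : V} (τ : Topo V A) {Sf : Finset (V × V)}
    (hid : ∀ l₁ l₂, IsPathOn A s t l₁ → IsPathOn A s t l₂ →
      (∀ e ∈ Sf, pathVec l₁ e = pathVec l₂ e) → pathVec l₁ = pathVec l₂) :
    ∀ (n : ℕ) (m pre : List V) (x : Option (Option (V × V))) (l : List V),
      IsPathOn A s t l → (arcsOf m).length ≤ n → l = pre ++ m →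
      PreC Sf s x pre m →
      ((arcsOf (x :: ((sigL Sf m).map hNode ++ [hTop]))).map (chv A Sf s t)).sum
        = lead x + indL (arcsOf m) := by
  intro n
  induction n with
  | zero =>
    intro m pre x l hl hlen heq hpre
    -- arcsOf m = [] hence m has no S-arc at all
    have hmnil : arcsOf m = [] := List.length_eq_zero_iff.mp (Nat.le_zero.mp hlen)
    have hsig : sigL Sf m = [] := by unfold sigL; rw [hmnil]; rfl
    rw [hsig]
    simp only [List.map_nil, List.nil_append]
    rw [show arcsOf [x, hTop] = [(x, hTop)] from rfl]
    have hmne : m ≠ [] := by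
      intro hm
      subst hm
      cases x with
      | none => obtain ⟨-, h2⟩ := hpre; simp at h2
      | some o =>
        cases o with
        | none => exact hpre
        | some a => obtain ⟨-, -, h2⟩ := hpre; simp at h2
    have hq : Qwit A Sf s t (x, hTop) (l, m) := by
      refine ⟨hl, ⟨⟨pre, [], by simp [heq], hpre, rfl, ?_⟩, ?_⟩⟩
      · rw [heq] at hl
        have := hl.2.2.1
        rw [List.getLast?_append_of_ne_nil _ hmne] at this
        exact this
      · intro e he
        rw [hmnil] at he
        simp at he
    simp only [List.map_cons, List.map_nil, List.sum_cons, List.sum_nil, add_zero]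
    rw [chv_eq τ hid hq]
  | succ n ih =>
    intro m pre x l hl hlen heq hpre
    have hmne : m ≠ [] := by
      intro hm
      subst hm
      cases x with
      | none => obtain ⟨-, h2⟩ := hpre; simp at h2
      | some o =>
        cases o with
        | none => exact hpre
        | some a => obtain ⟨-, -, h2⟩ := hpre; simp at h2
    rcases split_first Sf m with hfree | ⟨u, b, w, heqm, hbS, hfreeu⟩
    · -- no S-arc in m : same as base case
      have hsig : sigL Sf m = [] := by
        unfold sigL
        rw [List.filter_eq_nil_iff]
        intro e he
        simpa using hfree e he
      rw [hsig]
      simp only [List.map_nil, List.nil_append]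
      rw [show arcsOf [x, hTop] = [(x, hTop)] from rfl]
      have hq : Qwit A Sf s t (x, hTop) (l, m) := by
        refine ⟨hl, ⟨⟨pre, [], by simp [heq], hpre, rfl, ?_⟩, hfree⟩⟩
        rw [heq] at hl
        have := hl.2.2.1
        rw [List.getLast?_append_of_ne_nil _ hmne] at this
        exact this
      simp only [List.map_cons, List.map_nil, List.sum_cons, List.sum_nil, add_zero]
      rw [chv_eq τ hid hq]
    · -- m = u ++ b.1 :: b.2 :: w ; first S-arc is b
      set mseg : List V := u ++ [b.1] with hmseg
      set mrest : List V := b.2 :: w with hmrest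
      have hmsplit : m = mseg ++ mrest := by rw [heqm, hmseg, hmrest]; simp
      have hmsegne : mseg ≠ [] := by simp [hmseg]
      have hmrestne : mrest ≠ [] := by simp [hmrest]
      have hglue : glue mseg mrest = [b] := by
        rw [glue_ne mseg mrest hmsegne hmrestne]
        have h1 : mseg.getLast hmsegne = b.1 :=
          getLast_eq_of_getLast? (by simp [hmseg]) hmsegne
        have h2 : mrest.head hmrestne = b.2 := rfl
        rw [h1, h2]
      have harcm : arcsOf m = arcsOf mseg ++ [b] ++ arcsOf mrest := by
        rw [hmsplit, arcsOf_append, hglue]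
      have hsig : sigL Sf m = b :: sigL Sf mrest := by
        unfold sigL
        rw [harcm]
        rw [List.filter_append, List.filter_append]
        have h1 : (arcsOf mseg).filter (· ∈ Sf) = [] := by
          rw [List.filter_eq_nil_iff]
          intro e he
          simpa using hfreeu e he
        have h2 : ([b]).filter (· ∈ Sf) = [b] := by simp [hbS]
        rw [h1, h2]
        simp
      rw [hsig]
      simp only [List.map_cons]
      rw [show (x :: (hNode b :: (sigL Sf mrest).map hNode ++ [hTop]))
          = x :: hNode b :: ((sigL Sf mrest).map hNode ++ [hTop]) by simp]
      rw [arcsOf_cons_cons]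
      simp only [List.map_cons, List.sum_cons]
      -- IH for the rest
      have hlenr : (arcsOf mrest).length ≤ n := by
        have : (arcsOf m).length = (arcsOf mseg).length + 1 + (arcsOf mrest).length := by
          rw [harcm]
          simp only [List.length_append, List.length_cons, List.length_nil]
        omega
      have heq' : l = (pre ++ mseg) ++ mrest := by
        rw [heq, hmsplit]; simp
      have hpre' : PreC Sf s (hNode b) (pre ++ mseg) mrest :=
        ⟨hbS, ⟨pre ++ u, by simp [hmseg]⟩, rfl⟩
      have hrest := ih mrest (pre ++ mseg) (hNode b) l hl hlenr heq' hpre'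
      rw [hrest]
      -- first chunk
      have hq : Qwit A Sf s t (x, hNode b) (l, mseg) := by
        refine ⟨hl, ⟨⟨pre, mrest, by rw [heq, hmsplit]; simp, ?_, ?_⟩, hfreeu⟩⟩
        · refine PreC_shift hpre ?_
          rw [hmsplit, hmseg]
          rw [show (u ++ [b.1]) ++ mrest = u ++ b.1 :: mrest by simp]
          rw [head?_append_cons u b.1 mrest]
        · exact ⟨hbS, ⟨w, rfl⟩, by simp [hmseg]⟩
      rw [chv_eq τ hid hq]
      rw [harcm, indL_append, indL_append, indL_singleton]
      show lead x + indL (arcsOf mseg) + (lead (hNode b) + indL (arcsOf mrest)) = _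
      rw [show lead (hNode b) = dvec b from rfl]
      abel

theorem pathVec_eq_chv_sum {A : Set (V × V)} {s t : V} (τ : Topo V A) {Sf : Finset (V × V)}
    (hid : ∀ l₁ l₂, IsPathOn A s t l₁ → IsPathOn A s t l₂ →
      (∀ e ∈ Sf, pathVec l₁ e = pathVec l₂ e) → pathVec l₁ = pathVec l₂)
    {l : List V} (hl : IsPathOn A s t l) :
    pathVec l = ((arcsOf (hvseq Sf l)).map (chv A Sf s t)).sum := by
  have := chv_decomp τ hid (arcsOf l).length l [] hBot l hl le_rfl (by simp)
    ⟨rfl, hl.2.1⟩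
  rw [show hvseq Sf l = hBot :: ((sigL Sf l).map hNode ++ [hTop]) from rfl, this]
  rw [show lead (hBot : Option (Option (V × V))) = 0 from rfl]
  rw [pathVec_eq_indL hl.1]
  simp

def hord {A : Set (V × V)} (τ : Topo V A) :
    Option (Option (V × V)) → Option (Option (V × V)) → Prop
  | none, none => False
  | none, some _ => True
  | some none, _ => False
  | some (some _), none => False
  | some (some _), some none => True
  | some (some a), some (some b) => τ.lt a.1 b.1

theorem hord_irrefl {A : Set (V × V)} (τ : Topo V A) (x : Option (Option (V × V))) :
    ¬ hord τ x x := by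
  cases x with
  | none => simp [hord]
  | some o =>
    cases o with
    | none => simp [hord]
    | some a =>
      intro h
      exact τ.asymm h h

theorem hord_trans {A : Set (V × V)} (τ : Topo V A) {x y z : Option (Option (V × V))}
    (h1 : hord τ x y) (h2 : hord τ y z) : hord τ x z := by
  cases x with
  | none =>
    cases y with
    | none => exact absurd h1 (by simp [hord])
    | some oy =>
      cases z with
      | none =>
        cases oy with
        | none => exact absurd h2 (by simp [hord])
        | some b => exact absurd h2 (by simp [hord])
      | some oz => trivial
  | some ox =>
    cases ox with
    | none =>
      cases y <;> exact absurd h1 (by simp [hord])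
    | some a =>
      cases y with
      | none => exact absurd h1 (by simp [hord])
      | some oy =>
        cases oy with
        | none =>
          cases z with
          | none => exact absurd h2 (by simp [hord])
          | some oz =>
            cases oz with
            | none => exact absurd h2 (by simp [hord])
            | some c => exact absurd h2 (by simp [hord])
        | some b =>
          cases z with
          | none => exact absurd h2 (by simp [hord])
          | some oz =>
            cases oz with
            | none => trivial
            | some c => exact τ.trans h1 h2

theorem hord_asymm {A : Set (V × V)} (τ : Topo V A) {x y : Option (Option (V × V))}
    (h1 : hord τ x y) (h2 : hord τ y x) : False :=
  hord_irrefl τ x (hord_trans τ h1 h2)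

theorem hord_ne {A : Set (V × V)} (τ : Topo V A) {x y : Option (Option (V × V))}
    (h1 : hord τ x y) : x ≠ y := by
  intro h; subst h; exact hord_irrefl τ x h1

theorem hord_ne_bot {A : Set (V × V)} (τ : Topo V A) {x y : Option (Option (V × V))}
    (h1 : hord τ x y) : y ≠ hBot := by
  intro h
  subst h
  cases x with
  | none => exact h1
  | some o =>
    cases o with
    | none => exact h1
    | some a => exact h1

theorem hord_wf {A : Set (V × V)} (τ : Topo V A) : WellFounded (hord τ) := by
  haveI : IsTrans (Option (Option (V × V))) (hord τ) := ⟨fun a b c => hord_trans τ⟩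
  haveI : IsIrrefl (Option (Option (V × V))) (hord τ) := ⟨hord_irrefl τ⟩
  exact Finite.wellFounded_of_trans_of_irrefl _

theorem pairwise_hvseq {A : Set (V × V)} {s t : V} (τ : Topo V A) (Sf : Finset (V × V))
    {l : List V} (hl : IsPathOn A s t l) :
    (hvseq Sf l).Pairwise (hord τ) := by
  have h0 : (arcsOf l).Pairwise (fun p q => τ.lt p.1 q.1) :=
    pairwise_arcsOf_of_pairwise (pairwise_of_arcs τ hl.2.2.2)
  have h1 : (sigL Sf l).Pairwise (fun p q => τ.lt p.1 q.1) :=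
    h0.sublist List.filter_sublist
  have h2 : ((sigL Sf l).map hNode).Pairwise (hord τ) := by
    rw [List.pairwise_map]
    exact h1.imp (fun h => h)
  unfold hvseq
  refine List.pairwise_cons.mpr ⟨?_, ?_⟩
  · intro y hy
    simp only [List.mem_append, List.mem_map, List.mem_singleton] at hy
    rcases hy with ⟨a, -, rfl⟩ | rfl
    · trivial
    · trivial
  · rw [List.pairwise_append]
    refine ⟨h2, by simp, ?_⟩
    intro x hx y hy
    simp only [List.mem_map] at hx
    obtain ⟨a, -, rfl⟩ := hx
    simp only [List.mem_singleton] at hy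
    subst hy
    trivial

theorem UP_hord {A : Set (V × V)} {s t : V} (τ : Topo V A) {Sf : Finset (V × V)}
    {ed : Option (Option (V × V)) × Option (Option (V × V))}
    (h : ed ∈ UPs A Sf s t) : hord τ ed.1 ed.2 := by
  obtain ⟨l, hl, hmem⟩ := h
  exact rel_of_mem_arcsOf_of_pairwise (pairwise_hvseq τ Sf hl) hmem

theorem mem_tail_incoming {α : Type*} :
    ∀ (c : α) (ms : List α) (y : α), y ∈ ms →
      ∃ ed ∈ arcsOf (c :: ms), ed.2 = y := by
  intro c ms
  induction ms generalizing c with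
  | nil => intro y hy; simp at hy
  | cons d ms' ih =>
    intro y hy
    rcases List.mem_cons.mp hy with rfl | hy
    · exact ⟨(c, y), by rw [arcsOf_cons_cons]; simp, rfl⟩
    · obtain ⟨ed, hed, h2⟩ := ih d y hy
      exact ⟨ed, by rw [arcsOf_cons_cons]; simp [hed], h2⟩

theorem sum_map_add {α : Type*} {M : Type*} [AddCommGroup M] (L : List α) (f g : α → M) :
    (L.map (fun x => f x + g x)).sum = (L.map f).sum + (L.map g).sum := by
  induction L with
  | nil => simp
  | cons a L ih => simp [ih]; abel

def incUP (A : Set (V × V)) (Sf : Finset (V × V)) (s t : V)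
    (y : Option (Option (V × V))) : Prop :=
  ∃ ed, ed ∈ UPs A Sf s t ∧ ed.2 = y

open Classical in
noncomputable def peF (A : Set (V × V)) (Sf : Finset (V × V)) (s t : V)
    (y : Option (Option (V × V))) : Option (Option (V × V)) × Option (Option (V × V)) :=
  if h : incUP A Sf s t y then Classical.choose h else (hBot, hBot)

theorem peF_spec {A : Set (V × V)} {Sf : Finset (V × V)} {s t : V}
    {y : Option (Option (V × V))} (h : incUP A Sf s t y) :
    peF A Sf s t y ∈ UPs A Sf s t ∧ (peF A Sf s t y).2 = y := by
  unfold peF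
  rw [dif_pos h]
  exact Classical.choose_spec h

theorem peF_hord {A : Set (V × V)} (τ : Topo V A) {Sf : Finset (V × V)} {s t : V}
    {y : Option (Option (V × V))} (h : incUP A Sf s t y) :
    hord τ (peF A Sf s t y).1 y := by
  have h1 := UP_hord τ (peF_spec h).1
  rwa [(peF_spec h).2] at h1

open Classical in
noncomputable def rF {A : Set (V × V)} (τ : Topo V A) (Sf : Finset (V × V)) (s t : V) :
    Option (Option (V × V)) → ((V × V) → ℝ) :=
  (hord_wf τ).fix (fun y rec =>
    if h : incUP A Sf s t y then
      chv A Sf s t (peF A Sf s t y) + rec (peF A Sf s t y).1 (peF_hord τ h)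
    else 0)

theorem rF_eq_pos {A : Set (V × V)} (τ : Topo V A) (Sf : Finset (V × V)) (s t : V)
    {y : Option (Option (V × V))} (h : incUP A Sf s t y) :
    rF τ Sf s t y = chv A Sf s t (peF A Sf s t y) + rF τ Sf s t (peF A Sf s t y).1 := by
  classical
  show (hord_wf τ).fix _ y = _
  rw [WellFounded.fix_eq]
  rw [dif_pos h]
  rfl

theorem tree_chpr_zero {A : Set (V × V)} (τ : Topo V A) (Sf : Finset (V × V)) (s t : V)
    {y : Option (Option (V × V))} (h : incUP A Sf s t y) :
    chv A Sf s t (peF A Sf s t y)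
      + (rF τ Sf s t (peF A Sf s t y).1 - rF τ Sf s t (peF A Sf s t y).2) = 0 := by
  rw [(peF_spec h).2, rF_eq_pos τ Sf s t h]
  abel

theorem WP_bound {A : Set (V × V)} {s t : V} (τ : Topo V A) (Sf : Finset (V × V))
    (hid : ∀ l₁ l₂, IsPathOn A s t l₁ → IsPathOn A s t l₂ →
      (∀ e ∈ Sf, pathVec l₁ e = pathVec l₂ e) → pathVec l₁ = pathVec l₂) :
    finrank ℝ (WPspan A s t) ≤ (Sf.card + 1) * Sf.card / 2 := by
  classical
  by_cases hex : ∃ l, IsPathOn A s t l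
  swap
  · have hempty : {d : (V × V) → ℝ | ∃ p ∈ XPath A s t, ∃ q ∈ XPath A s t, d = p - q} = ∅ := by
      ext d
      simp only [Set.mem_setOf_eq, Set.mem_empty_iff_false, iff_false]
      rintro ⟨p, ⟨l, hl, -⟩, -⟩
      exact hex ⟨l, hl⟩
    rw [WPspan, hempty, Submodule.span_empty]
    simp
  obtain ⟨l₀, hl₀⟩ := hex
  set ch' : (Option (Option (V × V)) × Option (Option (V × V))) → ((V × V) → ℝ) :=
    fun ed => chv A Sf s t ed + (rF τ Sf s t ed.1 - rF τ Sf s t ed.2) with hch'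
  set UPf : Finset (Option (Option (V × V)) × Option (Option (V × V))) :=
    Finset.univ.filter (· ∈ UPs A Sf s t) with hUPf
  set UsedF : Finset (Option (Option (V × V))) :=
    UPf.image Prod.fst ∪ UPf.image Prod.snd with hUsedF
  have mem_UPf : ∀ ed, ed ∈ UPf ↔ ed ∈ UPs A Sf s t := by
    intro ed; simp [hUPf]
  -- every used vertex other than hBot has an incoming used edge
  have h_used_inc : ∀ y ∈ UsedF, y ≠ hBot → incUP A Sf s t y := by
    intro y hy hyb
    rw [hUsedF, Finset.mem_union] at hy
    rcases hy with hy | hy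
    · obtain ⟨ed, hed, rfl⟩ := Finset.mem_image.mp hy
      obtain ⟨l, hl, hm⟩ := (mem_UPf ed).mp hed
      have h1 : ed.1 ∈ hvseq Sf l := (mem_arcsOf hm).1
      have h2 : ed.1 ∈ (sigL Sf l).map hNode ++ [hTop] := by
        rcases List.mem_cons.mp h1 with h | h
        · exact absurd h hyb
        · exact h
      obtain ⟨ed', hed', h3⟩ := mem_tail_incoming hBot _ _ h2
      exact ⟨ed', (by exact ⟨l, hl, hed'⟩), h3⟩
    · obtain ⟨ed, hed, rfl⟩ := Finset.mem_image.mp hy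
      exact ⟨ed, (mem_UPf ed).mp hed, rfl⟩
  set TreeF : Finset (Option (Option (V × V)) × Option (Option (V × V))) :=
    (UsedF.erase hBot).image (peF A Sf s t) with hTreeF
  set NT := UPf \ TreeF with hNT
  have h_inc_of_erase : ∀ y ∈ UsedF.erase hBot, incUP A Sf s t y := by
    intro y hy
    exact h_used_inc y (Finset.mem_of_mem_erase hy) (Finset.ne_of_mem_erase hy)
  have h_tree_sub : TreeF ⊆ UPf := by
    intro ed hed
    rw [hTreeF] at hed
    obtain ⟨y, hy, rfl⟩ := Finset.mem_image.mp hed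
    exact (mem_UPf _).mpr (peF_spec (h_inc_of_erase y hy)).1
  have h_tree_card : TreeF.card = (UsedF.erase hBot).card := by
    rw [hTreeF]
    apply Finset.card_image_of_injOn
    intro y₁ hy₁ y₂ hy₂ heq
    have e1 := (peF_spec (h_inc_of_erase y₁ hy₁)).2
    have e2 := (peF_spec (h_inc_of_erase y₂ hy₂)).2
    rw [← e1, ← e2, heq]
  -- endpoints of used edges are used
  have h_endpoints : ∀ ed ∈ UPf, ed.1 ∈ UsedF ∧ ed.2 ∈ UsedF := by
    intro ed hed
    constructor
    · rw [hUsedF, Finset.mem_union]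
      exact Or.inl (Finset.mem_image.mpr ⟨ed, hed, rfl⟩)
    · rw [hUsedF, Finset.mem_union]
      exact Or.inr (Finset.mem_image.mpr ⟨ed, hed, rfl⟩)
  have hBot_used : hBot ∈ UsedF := by
    have hne : (sigL Sf l₀).map hNode ++ [hTop] ≠ [] := by simp
    have hmem := mem_arcsOf_cons_head hBot _ hne
    have hUP : (hBot, ((sigL Sf l₀).map hNode ++ [hTop]).head hne) ∈ UPf :=
      (mem_UPf _).mpr ⟨l₀, hl₀, hmem⟩
    exact (h_endpoints _ hUP).1
  -- counting
  have h_count : UPf.card ≤ UsedF.card.choose 2 := by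
    have := Finset.card_le_card_of_injOn
      (f := fun ed : (Option (Option (V × V)) × Option (Option (V × V))) =>
        ({ed.1, ed.2} : Finset (Option (Option (V × V)))))
      (s := UPf) (t := UsedF.powersetCard 2) ?_ ?_
    · rwa [Finset.card_powersetCard] at this
    · intro ed hed
      rw [Finset.mem_coe, Finset.mem_powersetCard]
      have hord1 := UP_hord τ ((mem_UPf ed).mp hed)
      refine ⟨?_, Finset.card_pair (hord_ne τ hord1)⟩
      intro z hz
      rcases Finset.mem_insert.mp hz with rfl | hz
      · exact (h_endpoints ed hed).1
      · rw [Finset.mem_singleton] at hz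
        subst hz
        exact (h_endpoints ed hed).2
    · intro ed hed ed' hed' heq
      have o1 := UP_hord τ ((mem_UPf ed).mp hed)
      have o2 := UP_hord τ ((mem_UPf ed').mp hed')
      have heq' : ({ed.1, ed.2} : Finset (Option (Option (V × V)))) = {ed'.1, ed'.2} := heq
      have m1 : ed.1 ∈ ({ed'.1, ed'.2} : Finset _) := by
        rw [← heq']; simp
      have m2 : ed.2 ∈ ({ed'.1, ed'.2} : Finset _) := by
        rw [← heq']; simp
      simp only [Finset.mem_insert, Finset.mem_singleton] at m1 m2
      rcases m1 with m1 | m1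
      · rcases m2 with m2 | m2
        · exfalso
          rw [m1, m2] at o1
          exact hord_irrefl τ _ o1
        · exact Prod.ext m1 m2
      · rcases m2 with m2 | m2
        · exfalso
          rw [m1, m2] at o1
          exact hord_asymm τ o1 o2
        · exfalso
          rw [m1, m2] at o1
          exact hord_irrefl τ _ o1
  have h_used_card : UsedF.card ≤ Sf.card + 2 := by
    have hsub : UsedF ⊆ insert hBot (insert hTop (Sf.image hNode)) := by
      intro y hy
      have hy' : ∃ ed ∈ UPf, y = ed.1 ∨ y = ed.2 := by
        rw [hUsedF, Finset.mem_union] at hy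
        rcases hy with hy | hy
        · obtain ⟨ed, hed, rfl⟩ := Finset.mem_image.mp hy
          exact ⟨ed, hed, Or.inl rfl⟩
        · obtain ⟨ed, hed, rfl⟩ := Finset.mem_image.mp hy
          exact ⟨ed, hed, Or.inr rfl⟩
      obtain ⟨ed, hed, hcase⟩ := hy'
      obtain ⟨l, hl, hm⟩ := (mem_UPf ed).mp hed
      have hy2 : y ∈ hvseq Sf l := by
        rcases hcase with rfl | rfl
        · exact (mem_arcsOf hm).1
        · exact (mem_arcsOf hm).2
      unfold hvseq at hy2
      rcases List.mem_cons.mp hy2 with rfl | hy2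
      · simp
      · rw [List.mem_append] at hy2
        rcases hy2 with hy2 | hy2
        · obtain ⟨a, ha, rfl⟩ := List.mem_map.mp hy2
          have haS : a ∈ Sf := by
            unfold sigL at ha
            have := List.of_mem_filter ha
            simpa using this
          simp only [Finset.mem_insert]
          right; right
          exact Finset.mem_image.mpr ⟨a, haS, rfl⟩
        · simp only [List.mem_singleton] at hy2
          subst hy2
          simp
    calc UsedF.card ≤ _ := Finset.card_le_card hsub
      _ ≤ (insert hTop (Sf.image hNode)).card + 1 := Finset.card_insert_le _ _
      _ ≤ (Sf.image hNode).card + 1 + 1 := by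
          have := Finset.card_insert_le hTop (Sf.image hNode)
          omega
      _ ≤ Sf.card + 2 := by
          have := Finset.card_image_le (s := Sf) (f := hNode)
          omega
  -- the sum identity
  have h_sum : ∀ l, IsPathOn A s t l →
      ((arcsOf (hvseq Sf l)).map ch').sum
        = pathVec l + (rF τ Sf s t hBot - rF τ Sf s t hTop) := by
    intro l hl
    rw [hch']
    rw [sum_map_add]
    rw [← pathVec_eq_chv_sum τ hid hl]
    congr 1
    have hshape : hvseq Sf l = hBot :: ((sigL Sf l).map hNode ++ [hTop]) := rfl
    rw [hshape, telescope (rF τ Sf s t) _ hBot]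
    congr 1
    have hthis : (hBot :: ((sigL Sf l).map hNode ++ [hTop]))
        = (hBot :: (sigL Sf l).map hNode) ++ [hTop] := by simp
    have hlst : (hBot :: ((sigL Sf l).map hNode ++ [hTop])).getLast? = some hTop := by
      rw [hthis]
      exact List.getLast?_concat
    rw [getLast_eq_of_getLast? hlst (List.cons_ne_nil _ _)]
  -- all chunk sums live in the span of nontree chunks
  set Kspan : Submodule ℝ ((V × V) → ℝ) :=
    Submodule.span ℝ ((NT.image ch' : Finset ((V × V) → ℝ)) : Set ((V × V) → ℝ)) with hK
  have h_chunk_mem : ∀ l, IsPathOn A s t l →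
      ((arcsOf (hvseq Sf l)).map ch').sum ∈ Kspan := by
    intro l hl
    apply list_sum_mem
    intro v hv
    obtain ⟨ed, hed, rfl⟩ := List.mem_map.mp hv
    have hUP : ed ∈ UPf := (mem_UPf _).mpr ⟨l, hl, hed⟩
    by_cases htree : ed ∈ TreeF
    · have : ch' ed = 0 := by
        rw [hTreeF] at htree
        obtain ⟨y, hy, rfl⟩ := Finset.mem_image.mp htree
        exact tree_chpr_zero τ Sf s t (h_inc_of_erase y hy)
      rw [this]
      exact Submodule.zero_mem _
    · apply Submodule.subset_span
      rw [Finset.coe_image]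
      exact ⟨ed, by rw [hNT]; simp [hUP, htree], rfl⟩
  have h_le : WPspan A s t ≤ Kspan := by
    rw [WPspan]
    apply Submodule.span_le.mpr
    rintro d ⟨p, ⟨l₁, hl₁, rfl⟩, q, ⟨l₂, hl₂, rfl⟩, rfl⟩
    have e1 := h_sum l₁ hl₁
    have e2 := h_sum l₂ hl₂
    have : pathVec l₁ - pathVec l₂
        = ((arcsOf (hvseq Sf l₁)).map ch').sum - ((arcsOf (hvseq Sf l₂)).map ch').sum := by
      rw [e1, e2]; abel
    rw [this]
    exact Submodule.sub_mem _ (h_chunk_mem l₁ hl₁) (h_chunk_mem l₂ hl₂)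
  -- final counting
  have h_rank : finrank ℝ (WPspan A s t) ≤ NT.card := by
    calc finrank ℝ (WPspan A s t) ≤ finrank ℝ Kspan := Submodule.finrank_mono h_le
      _ ≤ (NT.image ch').card := finrank_span_finset_le_card _
      _ ≤ NT.card := Finset.card_image_le
  have h_NT_card : NT.card = UPf.card - TreeF.card := by
    rw [hNT]
    exact Finset.card_sdiff_of_subset h_tree_sub
  have h_erase_card : (UsedF.erase hBot).card = UsedF.card - 1 :=
    Finset.card_erase_of_mem hBot_used
  have h_used_pos : 1 ≤ UsedF.card := Finset.card_pos.mpr ⟨hBot, hBot_used⟩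
  -- UsedF.card.choose 2 = (UsedF.card - 1).choose 2 + (UsedF.card - 1)
  have h_choose : UsedF.card.choose 2 = (UsedF.card - 1).choose 2 + (UsedF.card - 1) := by
    obtain ⟨m, hm⟩ : ∃ m, UsedF.card = m + 1 := ⟨UsedF.card - 1, by omega⟩
    rw [hm]
    rw [Nat.choose_succ_succ]
    simp [Nat.choose_one_right]
    omega
  have h_NT_le : NT.card ≤ (UsedF.card - 1).choose 2 := by omega
  have h_final : (UsedF.card - 1).choose 2 ≤ (Sf.card + 1).choose 2 :=
    Nat.choose_le_choose 2 (by omega)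
  have h_two : (Sf.card + 1).choose 2 = (Sf.card + 1) * Sf.card / 2 := by
    rw [Nat.choose_two_right]
    simp
  omega

theorem exists_sep (A : Set (V × V)) :
    ∀ (n : ℕ) (W : Submodule ℝ ((V × V) → ℝ)), finrank ℝ W ≤ n →
      (∀ z ∈ W, ∀ e, e ∉ A → z e = 0) →
      ∃ T : Finset (V × V), ↑T ⊆ A ∧ T.card ≤ finrank ℝ W ∧
        ∀ z ∈ W, (∀ e ∈ T, z e = 0) → z = 0 := by
  classical
  intro n
  induction n with
  | zero =>
    intro W hrank hsupp
    have hbot : W = ⊥ := by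
      have : finrank ℝ W = 0 := Nat.le_zero.mp hrank
      exact Submodule.finrank_eq_zero.mp this
    refine ⟨∅, by simp, by simp, ?_⟩
    intro z hz _
    rw [hbot] at hz
    simpa using hz
  | succ n ih =>
    intro W hrank hsupp
    by_cases hWbot : W = ⊥
    · refine ⟨∅, by simp, by simp, ?_⟩
      intro z hz _
      rw [hWbot] at hz
      simpa using hz
    · obtain ⟨z₀, hz₀W, hz₀ne⟩ := (Submodule.ne_bot_iff W).mp hWbot
      obtain ⟨e₀, he₀⟩ : ∃ e₀, z₀ e₀ ≠ 0 := by
        by_contra hc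
        push_neg at hc
        exact hz₀ne (funext hc)
      have he₀A : e₀ ∈ A := by
        by_contra hc
        exact he₀ (hsupp z₀ hz₀W e₀ hc)
      set W₁ := W ⊓ LinearMap.ker (LinearMap.proj (R := ℝ) (φ := fun _ : V × V => ℝ) e₀)
        with hW₁
      have hle : W₁ ≤ W := inf_le_left
      have hlt : W₁ < W := by
        apply lt_of_le_of_ne hle
        intro heq
        have : z₀ ∈ W₁ := heq ▸ hz₀W
        rw [hW₁, Submodule.mem_inf] at this
        exact he₀ this.2
      have hrank1 : finrank ℝ W₁ < finrank ℝ W :=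
        Submodule.finrank_lt_finrank_of_lt hlt
      have hsupp1 : ∀ z ∈ W₁, ∀ e, e ∉ A → z e = 0 := fun z hz => hsupp z (hle hz)
      obtain ⟨T₁, hT₁A, hT₁card, hT₁sep⟩ := ih W₁ (by omega) hsupp1
      refine ⟨insert e₀ T₁, ?_, ?_, ?_⟩
      · intro e he
        rcases Finset.mem_insert.mp (by exact_mod_cast he) with rfl | he
        · exact he₀A
        · exact hT₁A he
      · calc (insert e₀ T₁).card ≤ T₁.card + 1 := Finset.card_insert_le _ _
          _ ≤ finrank ℝ W₁ + 1 := by omega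
          _ ≤ finrank ℝ W := by omega
      · intro z hzW hzT
        have hz₁ : z ∈ W₁ := by
          rw [hW₁, Submodule.mem_inf]
          refine ⟨hzW, ?_⟩
          have := hzT e₀ (Finset.mem_insert_self _ _)
          simpa using this
        exact hT₁sep z hz₁ (fun e he => hzT e (Finset.mem_insert_of_mem he))

theorem WPspan_supp {A : Set (V × V)} {s t : V} :
    ∀ z ∈ WPspan A s t, ∀ e, e ∉ A → z e = 0 := by
  intro z hz
  induction hz using Submodule.span_induction with
  | mem d hd =>
    obtain ⟨p, ⟨l₁, hl₁, rfl⟩, q, ⟨l₂, hl₂, rfl⟩, rfl⟩ := hd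
    intro e he
    have h1 : pathVec l₁ e = 0 := by
      have : e ∉ arcsOf l₁ := fun hc => he (hl₁.2.2.2 e hc)
      simp [pathVec, this]
    have h2 : pathVec l₂ e = 0 := by
      have : e ∉ arcsOf l₂ := fun hc => he (hl₂.2.2.2 e hc)
      simp [pathVec, this]
    simp [h1, h2]
  | zero => intro e _; rfl
  | add x y _ _ hx hy => intro e he; simp [hx e he, hy e he]
  | smul c x _ hx => intro e he; simp [hx e he]

end Big

end Stmt9

/-- Let `G` be a DAG with arc set `A` and nodes `s, t`.  If `S` is a minimum-cardinality
identifying set for the `s`-`t`-paths and `S'` is a minimum-cardinality identifying set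
for the `s`-`t`-flows of value 1, then `|S'| ≤ (|S| + 1)·|S| / 2`. -/
theorem stmt9 {V : Type*} [Fintype V] [DecidableEq V] (A : Set (V × V)) (s t : V)
    (hacyc : IsAcyclicDigraph A)
    (S S' : Set (V × V)) (hS : S ⊆ A) (hS' : S' ⊆ A)
    (hSid : Identifying (XPath A s t) S)
    (hSmin : ∀ S₂ ⊆ A, Identifying (XPath A s t) S₂ → S.ncard ≤ S₂.ncard)
    (hS'id : Identifying (XFlow A s t) S')
    (hS'min : ∀ S₂ ⊆ A, Identifying (XFlow A s t) S₂ → S'.ncard ≤ S₂.ncard) :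
    S'.ncard ≤ (S.ncard + 1) * S.ncard / 2 := by
  classical
  obtain ⟨τ⟩ := Stmt9.topo_exists hacyc
  have hSfin : S.Finite := Set.toFinite S
  set Sf : Finset (V × V) := hSfin.toFinset with hSfdef
  have hSf : ∀ e, e ∈ Sf ↔ e ∈ S := fun e => Set.Finite.mem_toFinset hSfin
  have hid : ∀ l₁ l₂, IsPathOn A s t l₁ → IsPathOn A s t l₂ →
      (∀ e ∈ Sf, pathVec l₁ e = pathVec l₂ e) → pathVec l₁ = pathVec l₂ := by
    intro l₁ l₂ h₁ h₂ hagree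
    by_contra hne
    obtain ⟨e, heS, hdiff⟩ :=
      hSid (pathVec l₁) ⟨l₁, h₁, rfl⟩ (pathVec l₂) ⟨l₂, h₂, rfl⟩ hne
    exact hdiff (hagree e ((hSf e).mpr heS))
  have hWP := Stmt9.WP_bound τ Sf hid
  obtain ⟨T, hTA, hTcard, hTsep⟩ :=
    Stmt9.exists_sep A (Module.finrank ℝ (Stmt9.WPspan A s t)) (Stmt9.WPspan A s t)
      le_rfl Stmt9.WPspan_supp
  have hTid : Identifying (XFlow A s t) ↑T := by
    intro x hx y hy hne
    by_contra hc
    push_neg at hc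
    apply hne
    have hz : x - y ∈ Stmt9.WPspan A s t := Stmt9.XFlow_diff_mem τ hx hy
    have hzero : x - y = 0 := by
      apply hTsep _ hz
      intro e he
      have := hc e (by exact_mod_cast he)
      simp [this]
    funext e
    have := congrFun hzero e
    simp only [Pi.sub_apply, Pi.zero_apply] at this
    linarith
  have hmain := hS'min ↑T hTA hTid
  have hSfcard : Sf.card = S.ncard := by
    rw [hSfdef]
    exact (Set.ncard_eq_toFinset_card S hSfin).symm
  calc S'.ncard ≤ (↑T : Set (V × V)).ncard := hmain
    _ = T.card := Set.ncard_coe_finset T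
    _ ≤ Module.finrank ℝ (Stmt9.WPspan A s t) := hTcard
    _ ≤ (Sf.card + 1) * Sf.card / 2 := hWP
    _ = (S.ncard + 1) * S.ncard / 2 := by rw [hSfcard]
end

section
/- In the setup described in the context (DAG G, identifying set S for the s-t-paths, arborescence T rooted at s, S' := E \ T, and the maps v_s and v_t), the following holds: for all arcs e, e' ∈ S' \ S, if v_s(e) = v_s(e') and v_t(e) = v_t(e'), then e = e'. -/
namespace Stmt12Aux
variable {V : Type*}

lemma arcsOf_cons_cons (a b : V) (l : List V) :
    arcsOf (a :: b :: l) = (a, b) :: arcsOf (b :: l) := rfl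

lemma arcsOf_nil : arcsOf ([] : List V) = [] := rfl
lemma arcsOf_single (a : V) : arcsOf [a] = [] := rfl

lemma arcsOf_append : ∀ {l1 : List V} (l2 : List V) {x y : V},
    l1.getLast? = some x → l2.head? = some y →
    arcsOf (l1 ++ l2) = arcsOf l1 ++ (x, y) :: arcsOf l2
  | [], _, _, _, h1, _ => by simp at h1
  | [a], l2, x, y, h1, h2 => by
      simp at h1; subst h1
      cases l2 with
      | nil => simp at h2
      | cons b l2' => simp at h2; subst h2; rfl
  | (a :: b :: l1'), l2, x, y, h1, h2 => by
      have h1' : (b :: l1').getLast? = some x := by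
        rw [List.getLast?_cons_cons] at h1; exact h1
      have := arcsOf_append (l1 := b :: l1') l2 h1' h2
      simp only [List.cons_append, arcsOf_cons_cons]
      exact congrArg (List.cons (a, b)) this

lemma arcsOf_glue {l1 l2 : List V} {x : V}
    (h1 : l1.getLast? = some x) (h2 : l2.head? = some x) :
    arcsOf (l1 ++ l2.tail) = arcsOf l1 ++ arcsOf l2 := by
  cases l2 with
  | nil => simp at h2
  | cons b l2' =>
    simp at h2; subst h2
    cases l2' with
    | nil => simp [arcsOf_single]
    | cons c l2'' =>
      rw [List.tail_cons, arcsOf_append (c :: l2'') h1 rfl]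
      rfl

lemma chain'_of_arcs {R : V → V → Prop} : ∀ {l : List V},
    (∀ p ∈ arcsOf l, R p.1 p.2) → l.IsChain R
  | [], _ => List.isChain_nil
  | [a], _ => List.isChain_singleton a
  | (a :: b :: l), h => by
      rw [List.isChain_cons_cons]
      exact ⟨h (a, b) (by simp [arcsOf_cons_cons]),
        chain'_of_arcs (fun p hp => h p (by rw [arcsOf_cons_cons]; exact List.mem_cons_of_mem _ hp))⟩


lemma head_mem_of_head? {l : List V} {u : V} (h : l.head? = some u) : u ∈ l := by
  cases l with
  | nil => simp at h
  | cons a l' => simp at h; subst h; exact List.mem_cons_self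

lemma mem_of_mem_arcsOf_fst {l : List V} {p : V × V} (h : p ∈ arcsOf l) : p.1 ∈ l :=
  (List.of_mem_zip h).1

lemma mem_tail_of_mem_arcsOf_snd {l : List V} {p : V × V} (h : p ∈ arcsOf l) : p.2 ∈ l.tail :=
  (List.of_mem_zip h).2

lemma mem_of_mem_arcsOf_snd {l : List V} {p : V × V} (h : p ∈ arcsOf l) : p.2 ∈ l :=
  List.mem_of_mem_tail (mem_tail_of_mem_arcsOf_snd h)

/-- Split a path at an interior vertex. -/
lemma split_path {A : Set (V × V)} {u v a : V} {l : List V}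
    (h : IsPathOn A u v l) (ha : a ∈ l) :
    ∃ l1 l2, l = l1 ++ l2.tail ∧ l1.getLast? = some a ∧ l2.head? = some a ∧
      IsPathOn A u a l1 ∧ IsPathOn A a v l2 ∧
      arcsOf l = arcsOf l1 ++ arcsOf l2 := by
  obtain ⟨lp, ls, rfl⟩ := List.append_of_mem ha
  obtain ⟨hnd, hhd, hlast, harcs⟩ := h
  refine ⟨lp ++ [a], a :: ls, by simp, by simp, rfl, ?_, ?_, ?_⟩
  · refine ⟨?_, ?_, by simp, ?_⟩
    · exact hnd.sublist (by
        have : (lp ++ [a]) ++ ls = lp ++ a :: ls := by simp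
        rw [← this]; exact List.sublist_append_left _ _)
    · rw [List.head?_append] at hhd ⊢
      cases hl : lp.head? with
      | none =>
        simp [hl] at hhd ⊢
        have : lp = [] := List.head?_eq_none_iff.mp hl
        subst this; simpa using hhd
      | some b => simp [hl] at hhd ⊢; exact hhd
    · intro p hp
      apply harcs
      have hdec := arcsOf_glue (l1 := lp ++ [a]) (l2 := a :: ls) (by simp) rfl
      simp only [List.tail_cons] at hdec
      rw [show lp ++ [a] ++ ls = lp ++ a :: ls by simp] at hdec
      rw [hdec]
      exact List.mem_append_left _ hp
  · refine ⟨?_, rfl, ?_, ?_⟩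
    · exact hnd.sublist (List.sublist_append_right lp _)
    · rw [List.getLast?_append] at hlast
      cases hl : (a :: ls).getLast? with
      | none => simp at hl
      | some b => simp_all
    · intro p hp
      apply harcs
      have hdec := arcsOf_glue (l1 := lp ++ [a]) (l2 := a :: ls) (by simp) rfl
      simp only [List.tail_cons] at hdec
      rw [show lp ++ [a] ++ ls = lp ++ a :: ls by simp] at hdec
      rw [hdec]
      exact List.mem_append_right _ hp
  · have hdec := arcsOf_glue (l1 := lp ++ [a]) (l2 := a :: ls) (by simp) rfl
    simp only [List.tail_cons] at hdec
    rw [show lp ++ [a] ++ ls = lp ++ a :: ls by simp] at hdec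
    exact hdec


lemma path_mono {A B : Set (V × V)} (hAB : A ⊆ B) {u v : V} {l : List V}
    (h : IsPathOn A u v l) : IsPathOn B u v l :=
  ⟨h.1, h.2.1, h.2.2.1, fun p hp => hAB (h.2.2.2 p hp)⟩

variable {f : V → ℕ}

lemma pairwise_lt_of_arcs {A : Set (V × V)} (hst : ∀ p ∈ A, f p.1 < f p.2)
    {l : List V} (h : ∀ p ∈ arcsOf l, p ∈ A) :
    l.Pairwise (fun u v => f u < f v) := by
  letI : IsTrans V (fun u v => f u < f v) := ⟨fun a b c hab hbc => lt_trans hab hbc⟩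
  exact List.isChain_iff_pairwise.mp
    ((chain'_of_arcs (R := fun u v => (u, v) ∈ A) h).imp (fun a b hab => hst (a, b) hab))

lemma nodup_of_arcs {A : Set (V × V)} (hst : ∀ p ∈ A, f p.1 < f p.2)
    {l : List V} (h : ∀ p ∈ arcsOf l, p ∈ A) : l.Nodup :=
  (pairwise_lt_of_arcs hst h).imp (fun hab heq => by subst heq; exact lt_irrefl _ hab)

lemma rel_head {R : V → V → Prop} {l : List V} {h u : V}
    (hp : l.Pairwise R) (hh : l.head? = some h) (hu : u ∈ l) : u = h ∨ R h u := by
  cases l with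
  | nil => simp at hu
  | cons a l' =>
    simp at hh; subst hh
    rcases List.mem_cons.mp hu with h1 | h1
    · exact Or.inl h1
    · exact Or.inr ((List.pairwise_cons.mp hp).1 u h1)

lemma rel_last {R : V → V → Prop} {l : List V} {x u : V}
    (hp : l.Pairwise R) (hx : l.getLast? = some x) (hu : u ∈ l) : u = x ∨ R u x := by
  have hp' : l.reverse.Pairwise (fun a b => R b a) := List.pairwise_reverse.mpr hp
  have hx' : l.reverse.head? = some x := by
    rw [List.head?_reverse]; exact hx
  exact rel_head hp' hx' (List.mem_reverse.mpr hu)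

lemma head_le_last {A : Set (V × V)} (hst : ∀ p ∈ A, f p.1 < f p.2)
    {u x : V} {l : List V} (h : IsPathOn A u x l) : f u ≤ f x := by
  have hp := pairwise_lt_of_arcs hst h.2.2.2
  rcases rel_last hp h.2.2.1 (head_mem_of_head? h.2.1) with h1 | h1
  · exact le_of_eq (congrArg f h1)
  · exact le_of_lt h1

lemma getLast?_glue {l1 l2 : List V} {x : V}
    (h1 : l1.getLast? = some x) (h2 : l2.head? = some x) :
    (l1 ++ l2.tail).getLast? = l2.getLast? := by
  cases l2 with
  | nil => simp at h2
  | cons b l2' =>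
    simp at h2; subst h2
    cases l2' with
    | nil => simpa using h1
    | cons c l2'' =>
      rw [List.tail_cons, List.getLast?_append, List.getLast?_cons_cons]
      cases hy : (c :: l2'').getLast? with
      | none => simp at hy
      | some y => rfl

/-- Build the combined path `lv ++ (lmid ++ R.tail)` through the arc `(v,w)`. -/
lemma build {A : Set (V × V)} (hst : ∀ p ∈ A, f p.1 < f p.2)
    {s v w b t : V} {lv lmid R : List V}
    (hvw : (v, w) ∈ A) (hlv : IsPathOn A s v lv) (hlmid : IsPathOn A w b lmid)
    (hR : IsPathOn A b t R) :
    IsPathOn A s t (lv ++ (lmid ++ R.tail)) ∧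
      arcsOf (lv ++ (lmid ++ R.tail)) =
        arcsOf lv ++ (v, w) :: (arcsOf lmid ++ arcsOf R) := by
  have harcsM : arcsOf (lmid ++ R.tail) = arcsOf lmid ++ arcsOf R :=
    arcsOf_glue hlmid.2.2.1 hR.2.1
  have headM : (lmid ++ R.tail).head? = some w := by
    rw [List.head?_append, hlmid.2.1]; rfl
  have hdec : arcsOf (lv ++ (lmid ++ R.tail)) =
      arcsOf lv ++ (v, w) :: (arcsOf lmid ++ arcsOf R) := by
    rw [arcsOf_append _ hlv.2.2.1 headM, harcsM]
  have harcsA : ∀ p ∈ arcsOf (lv ++ (lmid ++ R.tail)), p ∈ A := by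
    intro p hp
    rw [hdec] at hp
    rcases List.mem_append.mp hp with h1 | h1
    · exact hlv.2.2.2 p h1
    · rcases List.mem_cons.mp h1 with h2 | h2
      · subst h2; exact hvw
      · rcases List.mem_append.mp h2 with h3 | h3
        · exact hlmid.2.2.2 p h3
        · exact hR.2.2.2 p h3
  refine ⟨⟨nodup_of_arcs hst harcsA, ?_, ?_, harcsA⟩, hdec⟩
  · rw [List.head?_append, hlv.2.1]; rfl
  · rw [List.getLast?_append, getLast?_glue hlmid.2.2.1 hR.2.1, hR.2.2.1]; rfl


/-- If `e' = (v',w')` is an arc of the combined path for `e = (v,w)`, distinct from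
`(v,w)`, not in `T`, and `f w' ≤ f b`, then `f v < f v'`. -/
lemma compare {A T S : Set (V × V)} (hst : ∀ p ∈ A, f p.1 < f p.2)
    {v w v' w' b : V} {lv lmid R P : List V}
    (hdec : arcsOf P = arcsOf lv ++ (v, w) :: (arcsOf lmid ++ arcsOf R))
    (hlvT : ∀ p ∈ arcsOf lv, p ∈ T)
    (hvwA : (v, w) ∈ A)
    (hlmid : IsPathOn (A \ S) w b lmid)
    (hRA : ∀ p ∈ arcsOf R, p ∈ A) (hRhead : R.head? = some b)
    (hmem : (v', w') ∈ arcsOf P) (hne : (v', w') ≠ (v, w)) (hnT : (v', w') ∉ T)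
    (h'A : (v', w') ∈ A) (h'le : f w' ≤ f b) : f v < f v' := by
  have hvw_lt : f v < f w := hst (v, w) hvwA
  have hmidA : ∀ p ∈ arcsOf lmid, p ∈ A := fun p hp => (hlmid.2.2.2 p hp).1
  rw [hdec] at hmem
  rcases List.mem_append.mp hmem with h1 | h1
  · exact absurd (hlvT _ h1) hnT
  · rcases List.mem_cons.mp h1 with h2 | h2
    · exact absurd h2 hne
    · rcases List.mem_append.mp h2 with h3 | h3
      · -- in lmid : w ≤ v'
        have hv'mem : v' ∈ lmid := mem_of_mem_arcsOf_fst h3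
        have hp := pairwise_lt_of_arcs hst hmidA
        have : f w ≤ f v' := by
          rcases rel_head hp hlmid.2.1 hv'mem with h4 | h4
          · exact le_of_eq (congrArg f h4).symm
          · exact le_of_lt h4
        omega
      · -- in R : b ≤ v', but v' < w' ≤ b, contradiction
        have hv'mem : v' ∈ R := mem_of_mem_arcsOf_fst h3
        have hp := pairwise_lt_of_arcs hst hRA
        have hb_le : f b ≤ f v' := by
          rcases rel_head hp hRhead hv'mem with h4 | h4
          · exact le_of_eq (congrArg f h4).symm
          · exact le_of_lt h4
        have : f v' < f w' := hst (v', w') h'A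
        omega

/-- Construction of the perturbed path for an arc `e ∈ (A \ T) \ S`. -/
lemma construct {A S T : Set (V × V)} [DecidableEq V] {s t : V} {vs vt : V × V → V}
    (hst : ∀ p ∈ A, f p.1 < f p.2) (hS : S ⊆ A) (hT : T ⊆ A)
    (hvs : ∀ e ∈ A \ T, ∀ l : List V, IsPathOn T s e.1 l →
      vs e ∈ insert s {v | ∃ u, (u, v) ∈ S ∩ T} ∧ vs e ∈ l ∧
        ∀ u ∈ l, u ∈ insert s {v | ∃ u', (u', v) ∈ S ∩ T} →
          l.idxOf u ≤ l.idxOf (vs e))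
    {e : V × V} (he : e ∈ (A \ T) \ S)
    {lv : List V} (hlv : IsPathOn T s e.1 lv)
    {lmid : List V} (hlmid : IsPathOn (A \ S) e.2 (vt e) lmid)
    {R : List V} (hR : IsPathOn A (vt e) t R) :
    ∃ (l1 P : List V),
      IsPathOn T s (vs e) l1 ∧
      IsPathOn A s t P ∧
      arcsOf P = arcsOf lv ++ (e.1, e.2) :: (arcsOf lmid ++ arcsOf R) ∧
      (∀ p ∈ S, (p ∈ arcsOf P ↔ p ∈ arcsOf l1 ∨ p ∈ arcsOf R)) := by
  obtain ⟨heA, heS⟩ := he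
  have hvs_e := hvs e heA lv hlv
  obtain ⟨l1, l2, hlveq, hl1last, hl2head, hl1, hl2, hlvarcs⟩ := split_path hlv hvs_e.2.1
  have hlvA : IsPathOn A s e.1 lv := path_mono hT hlv
  have hlmidA : IsPathOn A e.2 (vt e) lmid := path_mono Set.diff_subset hlmid
  obtain ⟨hP, hdec⟩ := build hst heA.1 hlvA hlmidA hR
  refine ⟨l1, lv ++ (lmid ++ R.tail), hl1, hP, hdec, ?_⟩
  intro p hpS
  rw [hdec]
  constructor
  · intro hp
    rcases List.mem_append.mp hp with h1 | h1
    · rw [hlvarcs] at h1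
      rcases List.mem_append.mp h1 with h2 | h2
      · exact Or.inl h2
      · -- p ∈ arcsOf l2, p ∈ S ∩ T: contradicts maximality of vs e
        exfalso
        have hpT : p ∈ T := hlv.2.2.2 p (by rw [hlvarcs]; exact List.mem_append_right _ h2)
        have hp2Vs : p.2 ∈ insert s {v | ∃ u', (u', v) ∈ S ∩ T} :=
          Set.mem_insert_iff.mpr (Or.inr ⟨p.1, hpS, hpT⟩)
        have hp2lv : p.2 ∈ lv :=
          mem_of_mem_arcsOf_snd (by rw [hlvarcs]; exact List.mem_append_right _ h2)
        have hidx := hvs_e.2.2 p.2 hp2lv hp2Vs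
        -- p.2 ∈ l2.tail, and lv = l1 ++ l2.tail with vs e ∈ l1
        have hp2tail : p.2 ∈ l2.tail := mem_tail_of_mem_arcsOf_snd h2
        have hvsl1 : vs e ∈ l1 := List.mem_of_getLast? hl1last
        have hnd : (l1 ++ l2.tail).Nodup := by rw [← hlveq]; exact hlv.1
        obtain ⟨-, -, hdisj⟩ := List.nodup_append'.mp hnd
        have hp2nl1 : p.2 ∉ l1 := fun hmem => hdisj hmem hp2tail
        rw [hlveq] at hidx
        rw [List.idxOf_append_of_mem hvsl1, List.idxOf_append_of_notMem hp2nl1] at hidx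
        have := List.idxOf_lt_length_iff.mpr hvsl1
        omega
    · rcases List.mem_cons.mp h1 with h2 | h2
      · exact absurd (h2 ▸ hpS) (by rwa [Prod.mk.eta])
      · rcases List.mem_append.mp h2 with h3 | h3
        · exact absurd (hlmid.2.2.2 p h3).2 (fun h => h hpS)
        · exact Or.inr h3
  · intro hp
    rcases hp with h1 | h1
    · exact List.mem_append_left _ (by rw [hlvarcs]; exact List.mem_append_left _ h1)
    · exact List.mem_append_right _ (List.mem_cons_of_mem _ (List.mem_append_right _ h1))

end Stmt12Aux

open Stmt12Aux

/-- Setup of Claim 2 (`distinct pairs`): `G` is a DAG with arc set `A` in which every arc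
lies on an `s`-`t`-path, `ψ` is a topological ordering, `S ⊆ A` is identifying for the
`s`-`t`-paths, `T ⊆ A` is a (spanning) arborescence rooted at `s` (unique `T`-path from
`s` to every node), `S' = A \ T`, `V_s = {s} ∪ {heads of arcs of S ∩ T}`,
`V_t = {t} ∪ {tails of arcs of S}`, and for `e = (v, w) ∈ S'` the node `vs e` is the last
element of `V_s` on the unique `s`-`v`-path in `T`, while `vt e` is the `ψ`-minimal node
of `V_t` reachable from `w` in `(V, A \ S)`.  Conclusion: for all `e, e' ∈ S' \ S`,
if `vs e = vs e'` and `vt e = vt e'` then `e = e'`. -/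


theorem stmt12 {V : Type*} [Fintype V] [DecidableEq V] (A : Set (V × V)) (s t : V)
    (hacyc : IsAcyclicDigraph A)
    (hcov : ∀ e ∈ A, ∃ l, IsPathOn A s t l ∧ e ∈ arcsOf l)
    (ψ : V ≃ Fin (Fintype.card V))
    (hψ : ∀ e ∈ A, (ψ e.1 : ℕ) ≤ (ψ e.2 : ℕ))
    (S : Set (V × V)) (hS : S ⊆ A) (hid : Identifying (XPath A s t) S)
    (T : Set (V × V)) (hT : T ⊆ A)
    (harb : ∀ v : V, ∃! l : List V, IsPathOn T s v l)
    (vs vt : V × V → V)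
    (hvs : ∀ e ∈ A \ T, ∀ l : List V, IsPathOn T s e.1 l →
      vs e ∈ insert s {v | ∃ u, (u, v) ∈ S ∩ T} ∧ vs e ∈ l ∧
        ∀ u ∈ l, u ∈ insert s {v | ∃ u', (u', v) ∈ S ∩ T} →
          l.idxOf u ≤ l.idxOf (vs e))
    (hvt : ∀ e ∈ A \ T,
      vt e ∈ insert t {v | ∃ w, (v, w) ∈ S} ∧
      (∃ l, IsPathOn (A \ S) e.2 (vt e) l) ∧
      ∀ u ∈ insert t {v | ∃ w, (v, w) ∈ S},
        (∃ l, IsPathOn (A \ S) e.2 u l) → (ψ (vt e) : ℕ) ≤ (ψ u : ℕ)) :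
    ∀ e ∈ (A \ T) \ S, ∀ e' ∈ (A \ T) \ S,
      vs e = vs e' → vt e = vt e' → e = e' := by
  intro e he e' he' hvseq hvteq
  by_contra hne
  -- the topological ordering is strict along arcs
  set f : V → ℕ := fun v => (ψ v : ℕ) with hf
  have hst : ∀ p ∈ A, f p.1 < f p.2 := by
    intro p hp
    have hle := hψ p hp
    rcases eq_or_ne p.1 p.2 with heq | hne'
    · exfalso
      apply hacyc
      refine ⟨p.1, [], by simp, ?_⟩
      intro q hq
      have : q = (p.1, p.1) := by
        simpa [arcsOf] using hq
      rw [this, show (p.1, p.1) = p by rw [Prod.ext_iff]; exact ⟨rfl, heq⟩]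
      exact hp
    · exact lt_of_le_of_ne hle fun hh => hne' (ψ.injective (Fin.val_injective hh))
  -- common target vertex vt e and a path R from it to t
  obtain ⟨hbVt, ⟨lmid, hlmid⟩, -⟩ := hvt e he.1
  obtain ⟨hbVt', ⟨lmid', hlmid'⟩, -⟩ := hvt e' he'.1
  have hR : ∃ R, IsPathOn A (vt e) t R := by
    rcases Set.mem_insert_iff.mp hbVt with hbt | ⟨c, hbc⟩
    · rw [hbt]; exact ⟨[t], by simp [IsPathOn, arcsOf]⟩
    · obtain ⟨lf, hlf, hflf⟩ := hcov (vt e, c) (hS hbc)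
      have hbf : vt e ∈ lf := mem_of_mem_arcsOf_fst hflf
      obtain ⟨-, l2, -, -, -, -, hl2, -⟩ := split_path hlf hbf
      exact ⟨l2, hl2⟩
  obtain ⟨R, hR⟩ := hR
  -- T-paths to the tails
  obtain ⟨lv, hlv⟩ := (harb e.1).exists
  obtain ⟨lv', hlv'⟩ := (harb e'.1).exists
  -- construct the two perturbed paths
  obtain ⟨l1, P, hl1, hP, hdec, htrace⟩ := construct hst hS hT hvs he hlv hlmid hR
  obtain ⟨l1', P', hl1', hP', hdec', htrace'⟩ :=
    construct hst hS hT hvs he' hlv' hlmid' (hvteq ▸ hR)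
  -- the two prefix T-paths to vs e = vs e' coincide
  have hl1eq : l1 = l1' := by
    rw [hvseq] at hl1
    exact (harb (vs e')).unique hl1 hl1'
  -- the two paths agree on S, hence are equal
  have hxP : pathVec P ∈ XPath A s t := ⟨P, hP, rfl⟩
  have hxP' : pathVec P' ∈ XPath A s t := ⟨P', hP', rfl⟩
  have hveq : pathVec P = pathVec P' := by
    by_contra hne2
    obtain ⟨g, hgS, hgne⟩ := hid _ hxP _ hxP' hne2
    apply hgne
    have h1 := htrace g hgS
    have h2 := htrace' g hgS
    rw [hl1eq] at h1
    unfold pathVec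
    rw [if_congr (h1.trans h2.symm) rfl rfl]
  have hequiv : ∀ p, p ∈ arcsOf P ↔ p ∈ arcsOf P' := by
    intro p
    have := congrFun hveq p
    unfold pathVec at this
    constructor <;> intro h <;> by_contra h2 <;> simp [h, h2] at this
  -- e' is an arc of P' and hence of P; e is an arc of P and hence of P'
  have heP : (e.1, e.2) ∈ arcsOf P := by
    rw [hdec]; exact List.mem_append_right _ List.mem_cons_self
  have he'P' : (e'.1, e'.2) ∈ arcsOf P' := by
    rw [hdec']; exact List.mem_append_right _ List.mem_cons_self
  have he'P : (e'.1, e'.2) ∈ arcsOf P := (hequiv _).mpr he'P'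
  have heP' : (e.1, e.2) ∈ arcsOf P' := (hequiv _).mp heP
  -- apply the comparison lemma in both directions
  have hlvT : ∀ p ∈ arcsOf lv, p ∈ T := hlv.2.2.2
  have hlvT' : ∀ p ∈ arcsOf lv', p ∈ T := hlv'.2.2.2
  have hRA : ∀ p ∈ arcsOf R, p ∈ A := hR.2.2.2
  have hRhead : R.head? = some (vt e) := hR.2.1
  have hRhead' : R.head? = some (vt e') := hvteq ▸ hRhead
  have hne1 : (e'.1, e'.2) ≠ (e.1, e.2) := by
    simp only [Prod.mk.eta]; exact fun h => hne (h.symm)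
  have hne2 : (e.1, e.2) ≠ (e'.1, e'.2) := by
    simp only [Prod.mk.eta]; exact hne
  have hstS : ∀ p ∈ A \ S, f p.1 < f p.2 := fun p hp => hst p hp.1
  have hle' : f e'.2 ≤ f (vt e) := by rw [hvteq]; exact head_le_last hstS hlmid'
  have hle : f e.2 ≤ f (vt e') := by rw [← hvteq]; exact head_le_last hstS hlmid
  have h1 : f e.1 < f e'.1 :=
    Stmt12Aux.compare hst hdec hlvT he.1.1 hlmid hRA hRhead he'P hne1
      (by rw [Prod.mk.eta]; exact he'.1.2) (by rw [Prod.mk.eta]; exact he'.1.1) hle'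
  have h2 : f e'.1 < f e.1 :=
    Stmt12Aux.compare hst hdec' hlvT' he'.1.1 hlmid' hRA hRhead' heP' hne2
      (by rw [Prod.mk.eta]; exact he.1.2) (by rw [Prod.mk.eta]; exact he.1.1) hle
  omega
end
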